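/- arXiv:0706.0192 — 4 statements merged into one kernel-verified Lean document; each statement's English description precedes it below -/
import Mathlib

section
/- For the entropy-maximizing weights $p_k$ on the interior of a polytope with vertices $a_1,\dots,a_n$: if $\xi = \sum_k q_k (a_k - x)$ for some real numbers $q_k$, then $\sum_k (p_{k(\xi)}(x))^2 / p_k(x)^2 \le (n+1) \sum_k q_k^2 / p_k(x)^2$. -/
open Finset

/-- The entropy function of a polytope with vertices `a 1, …, a n`:
`U(x) = sup { ∑ᵢ ln pᵢ : pᵢ > 0, ∑ pᵢ = 1, ∑ pᵢ aᵢ = x }`. -/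
noncomputable def entropyU {d n : ℕ} (a : Fin n → EuclideanSpace ℝ (Fin d))
    (x : EuclideanSpace ℝ (Fin d)) : ℝ :=
  sSup {s | ∃ p : Fin n → ℝ, (∀ i, 0 < p i) ∧ ∑ i, p i = 1 ∧
    ∑ i, p i • a i = x ∧ s = ∑ i, Real.log (p i)}

section AuxHelpers
variable {d n : ℕ}
local notation "E" => EuclideanSpace ℝ (Fin d)


lemma core_ineq {n : ℕ} (p w q B : Fin n → ℝ) (γ : ℝ)
    (hp : ∀ k, 0 < p k) (hp1 : ∑ k, p k = 1)
    (hw : ∀ k, w k = p k * (γ + B k))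
    (hpw : ∑ k, p k * w k = 0)
    (hpB : ∑ k, p k * B k = 0)
    (hqc : ∑ k, q k * B k = -∑ k, (p k * w k) * B k) :
    ∑ k, (w k) ^ 2 ≤ ((n : ℝ) + 1) * ∑ k, (q k) ^ 2 / (p k) ^ 2 := by
  set S := ∑ k, (w k) ^ 2 with hS
  set Q := ∑ k, (q k) ^ 2 / (p k) ^ 2 with hQ
  have hS0 : 0 ≤ S := Finset.sum_nonneg fun k _ => sq_nonneg _
  have hQ0 : 0 ≤ Q := Finset.sum_nonneg fun k _ => div_nonneg (sq_nonneg _) (sq_nonneg _)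
  have hpB' : ∀ k, p k * B k = w k - γ * p k := fun k => by
    rw [hw k]; ring
  have hγ : γ = ∑ k, w k := by
    have : ∑ k, w k = γ * ∑ k, p k + ∑ k, p k * B k := by
      rw [Finset.mul_sum, ← Finset.sum_add_distrib]
      exact Finset.sum_congr rfl fun k _ => by rw [hw k]; ring
    rw [this, hp1, hpB]; ring
  -- ∑ (p w) B = S
  have key1 : ∑ k, (p k * w k) * B k = S := by
    have : ∀ k, (p k * w k) * B k = w k ^ 2 - γ * (p k * w k) := fun k => by
      have h1 : (p k * w k) * B k = w k * (p k * B k) := by ring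
      rw [h1, hpB' k]; ring
    rw [Finset.sum_congr rfl fun k _ => this k, Finset.sum_sub_distrib, ← Finset.mul_sum, hpw]
    ring
  -- S = ∑ (q/p)(γ p - w)
  have key2 : S = ∑ k, (q k / p k) * (γ * p k - w k) := by
    have : ∀ k, (q k / p k) * (γ * p k - w k) = -(q k * B k) := fun k => by
      have h2 := (hp k).ne'
      have h3 : B k = (w k - γ * p k) / p k := by
        rw [eq_div_iff h2]
        have := hpB' k; linarith [this]
      rw [h3]; field_simp; ring
    rw [Finset.sum_congr rfl fun k _ => this k]
    simp only [Finset.sum_neg_distrib, hqc, key1, neg_neg]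
  -- Cauchy-Schwarz
  have CS : S ^ 2 ≤ Q * ∑ k, (γ * p k - w k) ^ 2 := by
    calc S ^ 2 = (∑ k, (q k / p k) * (γ * p k - w k)) ^ 2 := by rw [key2]
    _ ≤ (∑ k, (q k / p k) ^ 2) * ∑ k, (γ * p k - w k) ^ 2 :=
        Finset.sum_mul_sq_le_sq_mul_sq _ _ _
    _ = Q * ∑ k, (γ * p k - w k) ^ 2 := by
        congr 1
        exact Finset.sum_congr rfl fun k _ => (div_pow _ _ _)
  -- bound ∑ (γ p - w)² ≤ (n+1) S
  have hple : ∀ k, p k ≤ 1 := by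
    intro k
    rw [← hp1]
    exact Finset.single_le_sum (fun i _ => (hp i).le) (Finset.mem_univ k)
  have hpsq : ∑ k, (p k) ^ 2 ≤ 1 := by
    rw [← hp1]
    exact Finset.sum_le_sum fun k _ => by nlinarith [hp k, hple k]
  have hγsq : γ ^ 2 ≤ (n : ℝ) * S := by
    rw [hγ]
    simpa using sq_sum_le_card_mul_sum_sq (s := Finset.univ) (f := w)
  have hbd : ∑ k, (γ * p k - w k) ^ 2 ≤ ((n : ℝ) + 1) * S := by
    have expand : ∑ k, (γ * p k - w k) ^ 2
        = γ ^ 2 * ∑ k, (p k) ^ 2 - 2 * γ * ∑ k, p k * w k + ∑ k, w k ^ 2 := by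
      have h4 : ∀ k, (γ * p k - w k) ^ 2
          = γ ^ 2 * p k ^ 2 - 2 * γ * (p k * w k) + w k ^ 2 := fun k => by ring
      simp only [Finset.sum_congr rfl fun k _ => h4 k, Finset.sum_add_distrib,
        Finset.sum_sub_distrib, ← Finset.mul_sum]
    rw [expand, hpw]
    have : γ ^ 2 * ∑ k, (p k) ^ 2 ≤ (n : ℝ) * S := by
      calc γ ^ 2 * ∑ k, (p k) ^ 2 ≤ γ ^ 2 * 1 :=
            mul_le_mul_of_nonneg_left hpsq (sq_nonneg _)
      _ = γ ^ 2 := mul_one _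
      _ ≤ (n : ℝ) * S := hγsq
    linarith
  -- conclude
  rcases eq_or_lt_of_le hS0 with h | h
  · rw [← h]; positivity
  · have : S ^ 2 ≤ Q * (((n : ℝ) + 1) * S) :=
      le_trans CS (mul_le_mul_of_nonneg_left hbd hQ0)
    nlinarith




lemma feas_bddAbove (a : Fin n → E) (y : E) :
    ∀ s ∈ {s | ∃ p : Fin n → ℝ, (∀ i, 0 < p i) ∧ ∑ i, p i = 1 ∧
      ∑ i, p i • a i = y ∧ s = ∑ i, Real.log (p i)}, s ≤ 0 := by
  rintro s ⟨p, hpos, hsum, -, rfl⟩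
  apply Finset.sum_nonpos
  intro i _
  apply Real.log_nonpos (hpos i).le
  rw [← hsum]
  exact Finset.single_le_sum (fun j _ => (hpos j).le) (Finset.mem_univ i)

lemma feas_le_entropyU (a : Fin n → E) (y : E) (p' : Fin n → ℝ)
    (h1 : ∀ i, 0 < p' i) (h2 : ∑ i, p' i = 1) (h3 : ∑ i, p' i • a i = y) :
    ∑ i, Real.log (p' i) ≤ entropyU a y :=
  le_csSup ⟨0, fun s hs => feas_bddAbove a y s hs⟩ ⟨p', h1, h2, h3, rfl⟩

lemma max_unique (a : Fin n → E) (y : E) (p₁ p₂ : Fin n → ℝ)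
    (h1 : ∀ i, 0 < p₁ i) (h2 : ∑ i, p₁ i = 1) (h3 : ∑ i, p₁ i • a i = y)
    (h4 : ∑ i, Real.log (p₁ i) = entropyU a y)
    (g1 : ∀ i, 0 < p₂ i) (g2 : ∑ i, p₂ i = 1) (g3 : ∑ i, p₂ i • a i = y)
    (g4 : ∑ i, Real.log (p₂ i) = entropyU a y) : p₁ = p₂ := by
  by_contra hne
  have hex : ∃ k, p₁ k ≠ p₂ k := by
    by_contra h
    push_neg at h
    exact hne (funext h)
  obtain ⟨k₀, hk₀⟩ := hex
  set m : Fin n → ℝ := fun i => (p₁ i + p₂ i) / 2 with hm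
  have hmpos : ∀ i, 0 < m i := fun i => by have := h1 i; have := g1 i; positivity
  have hmsum : ∑ i, m i = 1 := by
    simp only [hm, ← Finset.sum_div, Finset.sum_add_distrib, h2, g2]; norm_num
  have hmmom : ∑ i, m i • a i = y := by
    have : ∀ i, m i • a i = (2:ℝ)⁻¹ • (p₁ i • a i) + (2:ℝ)⁻¹ • (p₂ i • a i) := by
      intro i
      simp only [hm, smul_smul, ← add_smul]
      congr 1
      ring
    rw [Finset.sum_congr rfl fun i _ => this i, Finset.sum_add_distrib,
      ← Finset.smul_sum, ← Finset.smul_sum, h3, g3, ← add_smul]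
    norm_num
  have hlog : ∀ i, (Real.log (p₁ i) + Real.log (p₂ i)) / 2 ≤ Real.log (m i) := by
    intro i
    rcases eq_or_ne (p₁ i) (p₂ i) with h | h
    · simp only [hm, h, add_self_div_two]
      exact le_rfl
    · have := strictConcaveOn_log_Ioi.2 (Set.mem_Ioi.2 (h1 i)) (Set.mem_Ioi.2 (g1 i)) h
        (by norm_num : (0:ℝ) < 1/2) (by norm_num : (0:ℝ) < 1/2) (by norm_num)
      have heq : (1/2 : ℝ) • p₁ i + (1/2 : ℝ) • p₂ i = m i := by
        simp only [hm, smul_eq_mul]; ring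
      rw [heq] at this
      simp only [smul_eq_mul] at this
      linarith
  have hstrict : (Real.log (p₁ k₀) + Real.log (p₂ k₀)) / 2 < Real.log (m k₀) := by
    have := strictConcaveOn_log_Ioi.2 (Set.mem_Ioi.2 (h1 k₀)) (Set.mem_Ioi.2 (g1 k₀)) hk₀
      (by norm_num : (0:ℝ) < 1/2) (by norm_num : (0:ℝ) < 1/2) (by norm_num)
    have heq : (1/2 : ℝ) • p₁ k₀ + (1/2 : ℝ) • p₂ k₀ = m k₀ := by
      simp only [hm, smul_eq_mul]; ring
    rw [heq] at this
    simp only [smul_eq_mul] at this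
    linarith
  have hsumlt : entropyU a y < ∑ i, Real.log (m i) := by
    have h5 : ∑ i, (Real.log (p₁ i) + Real.log (p₂ i)) / 2 < ∑ i, Real.log (m i) :=
      Finset.sum_lt_sum (fun i _ => hlog i) ⟨k₀, Finset.mem_univ k₀, hstrict⟩
    have h6 : ∑ i, (Real.log (p₁ i) + Real.log (p₂ i)) / 2 = entropyU a y := by
      rw [← Finset.sum_div, Finset.sum_add_distrib, h4, g4, add_self_div_two]
    linarith [h6 ▸ h5]
  exact absurd (feas_le_entropyU a y m hmpos hmsum hmmom) (not_le.2 hsumlt)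

lemma span_zero (a : Fin n → E) (hn : 0 < n)
    (hspan : affineSpan ℝ (Set.range a) = ⊤)
    (c : ℝ) (b : E) (h : ∀ k, c + inner ℝ b (a k) = (0:ℝ)) : c = 0 ∧ b = 0 := by
  have hv : vectorSpan ℝ (Set.range a) = ⊤ := AffineSubspace.vectorSpan_eq_top_of_affineSpan_eq_top ℝ _ _ hspan
  have k0 : Fin n := ⟨0, hn⟩
  have hb : b = 0 := by
    have hker : vectorSpan ℝ (Set.range a) ≤ LinearMap.ker (innerSL ℝ b : E →ₗ[ℝ] ℝ) := by
      rw [vectorSpan_eq_span_vsub_set_right ℝ (Set.mem_range_self k0)]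
      rw [Submodule.span_le]
      rintro v ⟨u, ⟨j, rfl⟩, rfl⟩
      simp only [SetLike.mem_coe, LinearMap.mem_ker, ContinuousLinearMap.coe_coe, innerSL_apply_apply,
        vsub_eq_sub, inner_sub_right]
      have hj := h j
      have hk := h k0
      linarith
    rw [hv] at hker
    have : inner ℝ b b = (0:ℝ) := hker (Submodule.mem_top)
    exact inner_self_eq_zero.mp this
  refine ⟨?_, hb⟩
  have := h k0
  rw [hb] at this
  simpa using this


lemma kkt (a : Fin n → E) (hn : 0 < n) (hspan : affineSpan ℝ (Set.range a) = ⊤)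
    (x : E) (px : Fin n → ℝ) (hpos : ∀ i, 0 < px i) (hsum : ∑ i, px i = 1)
    (hmom : ∑ i, px i • a i = x)
    (hmax : ∀ p' : Fin n → ℝ, (∀ i, 0 < p' i) → ∑ i, p' i = 1 → ∑ i, p' i • a i = x →
      ∑ i, Real.log (p' i) ≤ ∑ i, Real.log (px i)) :
    ∃ (c : ℝ) (b : E), ∀ k, c + inner ℝ b (a k) = (px k)⁻¹ := by
  classical
  -- the constraint map
  set L1 : (Fin n → ℝ) →L[ℝ] ℝ := ∑ k, ContinuousLinearMap.proj k with hL1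
  set L2 : (Fin n → ℝ) →L[ℝ] E :=
    ∑ k, (ContinuousLinearMap.proj (R := ℝ) (φ := fun _ : Fin n => ℝ) k).smulRight (a k) with hL2
  set f : (Fin n → ℝ) →L[ℝ] ℝ × E := L1.prod L2 with hf
  have hL1app : ∀ v, L1 v = ∑ i, v i := by
    intro v; simp [hL1, ContinuousLinearMap.sum_apply]
  have hL2app : ∀ v, L2 v = ∑ i, v i • a i := by
    intro v; simp [hL2, ContinuousLinearMap.sum_apply]
  have hfapp : ∀ v, f v = (∑ i, v i, ∑ i, v i • a i) := by
    intro v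
    simp [hf, ContinuousLinearMap.prod_apply, hL1app, hL2app]
  -- φ and its derivative
  set φ : (Fin n → ℝ) → ℝ := fun v => ∑ i, Real.log (v i) with hφ
  set φ' : (Fin n → ℝ) →L[ℝ] ℝ := ∑ k, (px k)⁻¹ • ContinuousLinearMap.proj k with hφ'
  have hφderiv : HasStrictFDerivAt φ φ' px := by
    rw [hφ, hφ']
    apply HasStrictFDerivAt.fun_sum
    intro k _
    exact ((Real.hasStrictDerivAt_log (hpos k).ne').comp_hasStrictFDerivAt px
      (hasStrictFDerivAt_apply (𝕜 := ℝ) (F' := fun _ : Fin n => ℝ) k px) :)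
  have hφ'app : ∀ k, φ' (Pi.single k 1) = (px k)⁻¹ := by
    intro k
    simp [hφ', ContinuousLinearMap.sum_apply, Pi.single_apply,
      Finset.sum_ite_eq', smul_eq_mul]
  -- local extremum
  have hextr : IsLocalExtrOn φ {v | f v = f px} px := by
    refine Or.inr ?_
    have hU : {v : Fin n → ℝ | ∀ i, 0 < v i} ∈ nhds px := by
      have : IsOpen {v : Fin n → ℝ | ∀ i, 0 < v i} := by
        have : {v : Fin n → ℝ | ∀ i, 0 < v i} = ⋂ i, (fun v : Fin n → ℝ => v i) ⁻¹' Set.Ioi 0 := by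
          ext v; simp
        rw [this]
        exact isOpen_iInter_of_finite fun i => (continuous_apply i).isOpen_preimage _ isOpen_Ioi
      exact this.mem_nhds (by exact hpos)
    have : ∀ᶠ v in nhdsWithin px {v | f v = f px}, φ v ≤ φ px := by
      filter_upwards [nhdsWithin_le_nhds hU, self_mem_nhdsWithin] with v hv hfeq
      have hfeq' : f v = f px := hfeq
      rw [hfapp v, hfapp px, hsum, hmom, Prod.mk.injEq] at hfeq'
      exact hmax v hv hfeq'.1 hfeq'.2
    exact this
  obtain ⟨Λ, Λ₀, hΛne, hcond⟩ :=
    hextr.exists_linear_map_of_hasStrictFDerivAt f.hasStrictFDerivAt hφderiv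
  have hcond' : ∀ k, Λ (1, a k) + Λ₀ * (px k)⁻¹ = 0 := by
    intro k
    have := hcond (Pi.single k 1)
    rw [hfapp (Pi.single k 1)] at this
    simp only [Finset.sum_pi_single', Finset.mem_univ, if_pos] at this
    have hs : ∑ i, Pi.single (M := fun _ : Fin n => ℝ) k 1 i • a i = a k := by
      rw [Finset.sum_eq_single k]
      · simp
      · intro j _ hj; simp [Pi.single_apply, hj]
      · intro h; exact absurd (Finset.mem_univ k) h
    rw [hs, hφ'app k, smul_eq_mul] at this
    exact this
  -- decompose Λ
  set c₁ : ℝ := Λ (1, 0) with hc₁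
  set Bf : E →ₗ[ℝ] ℝ := Λ.comp (LinearMap.inr ℝ ℝ E) with hBf
  set b₁ : E := (InnerProductSpace.toDual ℝ E).symm (LinearMap.toContinuousLinearMap Bf) with hb₁
  have hb₁app : ∀ v : E, inner ℝ b₁ v = Λ (0, v) := by
    intro v
    rw [hb₁]
    rw [InnerProductSpace.toDual_symm_apply]
    simp [hBf]
  have hΛdec : ∀ (t : ℝ) (v : E), Λ (t, v) = t * c₁ + inner ℝ b₁ v := by
    intro t v
    rw [hb₁app v, hc₁]
    have : (t, v) = t • ((1:ℝ), (0:E)) + ((0:ℝ), v) := by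
      simp [Prod.ext_iff]
    rw [this, map_add, map_smul]
    simp
  rcases eq_or_ne Λ₀ 0 with h0 | h0
  · exfalso
    have hz : ∀ k, c₁ + inner ℝ b₁ (a k) = (0:ℝ) := by
      intro k
      have := hcond' k
      rw [h0, zero_mul, add_zero, hΛdec 1 (a k), one_mul] at this
      exact this
    obtain ⟨hc0, hb0⟩ := span_zero a hn hspan c₁ b₁ hz
    apply hΛne
    have hΛ0 : Λ = 0 := by
      apply LinearMap.ext
      rintro ⟨t, v⟩
      rw [hΛdec t v, hc0, hb0]
      simp
    rw [hΛ0, h0]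
    rfl
  · refine ⟨-c₁ / Λ₀, -Λ₀⁻¹ • b₁, fun k => ?_⟩
    have := hcond' k
    rw [hΛdec 1 (a k), one_mul] at this
    have h5 : inner ℝ b₁ (a k) = -c₁ - Λ₀ * (px k)⁻¹ := by linarith
    rw [real_inner_smul_left, h5]
    field_simp
    ring

set_option maxHeartbeats 1000000 in
lemma main_deriv (a : Fin n → E) (hn : 0 < n)
    (hspan : affineSpan ℝ (Set.range a) = ⊤)
    (O : Set E) (hO : IsOpen O) (x : E) (hx : x ∈ O)
    (p : E → Fin n → ℝ)
    (hp : ∀ y ∈ O, (∀ i, 0 < p y i) ∧ ∑ i, p y i = 1 ∧ ∑ i, p y i • a i = y ∧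
        ∑ i, Real.log (p y i) = entropyU a y) :
    ∀ ξ : E, ∃ (γ : ℝ) (b : E),
      (∀ k, fderiv ℝ (fun y => p y k) x ξ = -(p x k) ^ 2 * (γ + inner ℝ b (a k))) ∧
      (∑ k, fderiv ℝ (fun y => p y k) x ξ) = 0 ∧
      (∑ k, (fderiv ℝ (fun y => p y k) x ξ) • a k) = ξ := by
  classical
  obtain ⟨hpos, hsum, hmom, hent⟩ := hp x hx
  -- KKT multipliers at x
  obtain ⟨c₀, b₀, hkkt⟩ := kkt a hn hspan x (p x) hpos hsum hmom
    (fun p' h1 h2 h3 => (feas_le_entropyU a x p' h1 h2 h3).trans_eq hent.symm)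
  set θs : ℝ × E := (c₀, b₀) with hθs
  -- the affine functionals ℓ k
  set ℓ : Fin n → (ℝ × E) →L[ℝ] ℝ := fun k =>
    ContinuousLinearMap.fst ℝ ℝ E + (innerSL ℝ (a k)).comp (ContinuousLinearMap.snd ℝ ℝ E)
    with hℓdef
  have hℓapp : ∀ k (θ : ℝ × E), ℓ k θ = θ.1 + inner ℝ (a k) θ.2 := by
    intro k θ; simp [hℓdef]
  have hℓθs : ∀ k, ℓ k θs = (p x k)⁻¹ := by
    intro k
    rw [hℓapp, hθs]
    rw [real_inner_comm]
    exact hkkt k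
  have hℓpos : ∀ k, (0:ℝ) < ℓ k θs := fun k => by rw [hℓθs]; exact inv_pos.2 (hpos k)
  -- the map g and its derivative D
  set g : ℝ × E → ℝ × E := fun θ => (∑ k, (ℓ k θ)⁻¹, ∑ k, (ℓ k θ)⁻¹ • a k) with hg
  set D : (ℝ × E) →L[ℝ] ℝ × E :=
    (∑ k, (-(p x k) ^ 2) • ℓ k).prod (∑ k, ((-(p x k) ^ 2) • ℓ k).smulRight (a k)) with hD
  have hinv : ∀ k, HasStrictFDerivAt (fun θ => (ℓ k θ)⁻¹) ((-(p x k) ^ 2) • ℓ k) θs := by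
    intro k
    have h1 : HasStrictFDerivAt (fun θ => (ℓ k θ)⁻¹) ((-((ℓ k θs) ^ 2)⁻¹) • ℓ k) θs :=
      (hasStrictDerivAt_inv (hℓpos k).ne').comp_hasStrictFDerivAt θs (ℓ k).hasStrictFDerivAt
    have h2 : (-((ℓ k θs) ^ 2)⁻¹) = -(p x k) ^ 2 := by
      rw [hℓθs k, inv_pow, inv_inv]
    rwa [h2] at h1
  have hDg : HasStrictFDerivAt g D θs := by
    rw [hD]
    apply HasStrictFDerivAt.prodMk
    · exact HasStrictFDerivAt.fun_sum fun k _ => hinv k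
    · apply HasStrictFDerivAt.fun_sum
      intro k _
      have := (hinv k).smul (hasStrictFDerivAt_const (a k) θs)
      convert this using 1
      ext θ <;> simp
      simp
  -- injectivity of D
  have hDzero : ∀ dθ : ℝ × E, D dθ = 0 → dθ = 0 := by
    intro dθ h0
    have hA1 : ∑ k, (-(p x k) ^ 2 * ℓ k dθ) = 0 := by
      have := congrArg Prod.fst h0
      simp only [hD, ContinuousLinearMap.prod_apply, ContinuousLinearMap.sum_apply,
        ContinuousLinearMap.smul_apply, smul_eq_mul] at this
      exact this
    have hA2 : ∑ k, (-(p x k) ^ 2 * ℓ k dθ) • a k = 0 := by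
      have := congrArg Prod.snd h0
      simp only [hD, ContinuousLinearMap.prod_apply, ContinuousLinearMap.sum_apply,
        ContinuousLinearMap.smulRight_apply, ContinuousLinearMap.smul_apply, smul_eq_mul] at this
      exact this
    have hT : ∑ k, (p x k * ℓ k dθ) ^ 2 = 0 := by
      have expand : ∀ k, (p x k * ℓ k dθ) ^ 2
          = -((-(p x k) ^ 2 * ℓ k dθ) * dθ.1) - inner ℝ ((-(p x k) ^ 2 * ℓ k dθ) • a k) dθ.2 := by
        intro k
        rw [real_inner_smul_left]
        have hμk : inner ℝ (a k) dθ.2 = ℓ k dθ - dθ.1 := by rw [hℓapp]; ring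
        rw [hμk]
        ring
      rw [Finset.sum_congr rfl fun k _ => expand k, Finset.sum_sub_distrib,
        Finset.sum_neg_distrib, ← Finset.sum_mul, hA1, ← sum_inner, hA2]
      simp
    have hμ : ∀ k, ℓ k dθ = 0 := by
      intro k
      have hk : (p x k * ℓ k dθ) ^ 2 = 0 := by
        have : ∀ j ∈ Finset.univ, (0:ℝ) ≤ (p x j * ℓ j dθ) ^ 2 := fun j _ => sq_nonneg _
        exact (Finset.sum_eq_zero_iff_of_nonneg this).mp hT k (Finset.mem_univ k)
      have := pow_eq_zero_iff (n := 2) (by norm_num) |>.mp hk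
      rcases mul_eq_zero.mp this with h | h
      · exact absurd h (hpos k).ne'
      · exact h
    have hz : ∀ k, dθ.1 + inner ℝ dθ.2 (a k) = (0:ℝ) := by
      intro k
      have := hμ k
      rw [hℓapp] at this
      rw [real_inner_comm]
      exact this
    obtain ⟨h1, h2⟩ := span_zero a hn hspan dθ.1 dθ.2 hz
    exact Prod.ext h1 h2
  have hDinj : Function.Injective D := by
    intro u v huv
    have : D (u - v) = 0 := by rw [map_sub, huv, sub_self]
    have := hDzero _ this
    exact sub_eq_zero.mp this
  have hDsurj : Function.Surjective D.toLinearMap :=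
    (LinearMap.injective_iff_surjective).mp hDinj
  set Deq : (ℝ × E) ≃L[ℝ] ℝ × E :=
    (LinearEquiv.ofBijective D.toLinearMap ⟨hDinj, hDsurj⟩).toContinuousLinearEquiv with hDeq
  have hDeqcoe : (Deq : (ℝ × E) →L[ℝ] ℝ × E) = D := by
    exact ContinuousLinearMap.ext fun θ => rfl
  have hDg' : HasStrictFDerivAt g (Deq : (ℝ × E) →L[ℝ] ℝ × E) θs := by
    rw [hDeqcoe]; exact hDg
  -- local inverse
  set Ψ := hDg'.localInverse g Deq θs with hΨ
  have hgθs : g θs = ((1:ℝ), x) := by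
    rw [hg]
    have h1 : ∑ k, (ℓ k θs)⁻¹ = 1 := by
      rw [Finset.sum_congr rfl fun k _ => by rw [hℓθs k, inv_inv]]
      exact hsum
    have h2 : ∑ k, (ℓ k θs)⁻¹ • a k = x := by
      rw [Finset.sum_congr rfl fun k _ => by rw [hℓθs k, inv_inv]]
      exact hmom
    simp only [h1, h2]
  have hright : ∀ᶠ w in nhds ((1:ℝ), x), g (Ψ w) = w := by
    have := hDg'.eventually_right_inverse
    rwa [hgθs] at this
  have hΨx : Ψ ((1:ℝ), x) = θs := by
    have := hDg'.localInverse_apply_image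
    rwa [hgθs] at this
  have hΨderiv : HasStrictFDerivAt Ψ ((Deq.symm : (ℝ × E) →L[ℝ] ℝ × E)) ((1:ℝ), x) := by
    have := hDg'.to_localInverse
    rwa [hgθs] at this
  -- eventual facts near x
  have htend : Filter.Tendsto (fun y : E => ((1:ℝ), y)) (nhds x) (nhds ((1:ℝ), x)) := by
    exact (continuous_const.prodMk continuous_id).tendsto x
  have ev1 : ∀ᶠ y in nhds x, g (Ψ ((1:ℝ), y)) = ((1:ℝ), y) := htend.eventually hright
  have hcontΨ : ContinuousAt Ψ ((1:ℝ), x) := by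
    have := hDg'.localInverse_continuousAt
    rwa [hgθs] at this
  have ev2 : ∀ᶠ y in nhds x, ∀ k, 0 < ℓ k (Ψ ((1:ℝ), y)) := by
    rw [Filter.eventually_all]
    intro k
    have hc : Filter.Tendsto (fun y : E => ℓ k (Ψ ((1:ℝ), y))) (nhds x) (nhds (ℓ k θs)) := by
      have h1 : ContinuousAt (fun y : E => Ψ ((1:ℝ), y)) x := hcontΨ.comp htend
      have h2 : ContinuousAt (fun y : E => ℓ k (Ψ ((1:ℝ), y))) x :=
        ((ℓ k).continuous.continuousAt).comp h1
      have h4 : (fun y : E => ℓ k (Ψ ((1:ℝ), y))) x = ℓ k θs := by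
        simp only []
        rw [hΨx]
      unfold ContinuousAt at h2
      rwa [h4] at h2
    exact hc.eventually (eventually_gt_nhds (hℓpos k))
  have ev3 : ∀ᶠ y in nhds x, y ∈ O := hO.mem_nhds hx
  -- eventually p y equals the explicit maximizer
  have evMain : ∀ᶠ y in nhds x, p y = fun k => (ℓ k (Ψ ((1:ℝ), y)))⁻¹ := by
    filter_upwards [ev1, ev2, ev3] with y h1 h2 h3
    simp only [hg] at h1
    obtain ⟨hs1, hs2⟩ := Prod.mk.injEq .. ▸ h1
    set θy := Ψ ((1:ℝ), y) with hθy
    set Φ : Fin n → ℝ := fun k => (ℓ k θy)⁻¹ with hΦ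
    have hΦpos : ∀ k, 0 < Φ k := fun k => inv_pos.2 (h2 k)
    have key : ∀ r : Fin n → ℝ, ∑ i, r i = 1 → ∑ i, r i • a i = y →
        ∑ k, r k * ℓ k θy = θy.1 + inner ℝ y θy.2 := by
      intro r hr1 hr2
      have : ∀ k, r k * ℓ k θy = r k * θy.1 + inner ℝ (r k • a k) θy.2 := by
        intro k
        rw [hℓapp, real_inner_smul_left]
        ring
      rw [Finset.sum_congr rfl fun k _ => this k, Finset.sum_add_distrib, ← Finset.sum_mul,
        hr1, ← sum_inner, hr2, one_mul]
    have hub : ∀ p' : Fin n → ℝ, (∀ i, 0 < p' i) → ∑ i, p' i = 1 → ∑ i, p' i • a i = y →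
        ∑ i, Real.log (p' i) ≤ ∑ i, Real.log (Φ i) := by
      intro p' g1 g2 g3
      have hstep : ∀ k, Real.log (p' k) - Real.log (Φ k) ≤ p' k * ℓ k θy - 1 := by
        intro k
        have hd : Real.log (p' k) - Real.log (Φ k) = Real.log (p' k / Φ k) :=
          (Real.log_div (g1 k).ne' (hΦpos k).ne').symm
        have hq : p' k / Φ k = p' k * ℓ k θy := by
          rw [hΦ]
          simp only [div_eq_mul_inv, inv_inv]
        rw [hd, hq]
        exact Real.log_le_sub_one_of_pos (mul_pos (g1 k) (h2 k))
      have hΦsum : ∑ k, Φ k * ℓ k θy = (n : ℝ) := by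
        have : ∀ k, Φ k * ℓ k θy = 1 := by
          intro k
          rw [hΦ]
          exact inv_mul_cancel₀ (h2 k).ne'
        rw [Finset.sum_congr rfl fun k _ => this k]
        simp
      have e1 : ∑ k, p' k * ℓ k θy = θy.1 + inner ℝ y θy.2 := key p' g2 g3
      have e2 : (θy.1 + inner ℝ y θy.2 : ℝ) = (n : ℝ) := by
        rw [← key Φ hs1 hs2, hΦsum]
      have : ∑ k, (Real.log (p' k) - Real.log (Φ k)) ≤ ∑ k, (p' k * ℓ k θy - 1) :=
        Finset.sum_le_sum fun k _ => hstep k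
      rw [Finset.sum_sub_distrib, Finset.sum_sub_distrib, e1, e2] at this
      simpa using this
    have hentΦ : ∑ i, Real.log (Φ i) = entropyU a y := by
      apply le_antisymm
      · exact feas_le_entropyU a y Φ hΦpos hs1 hs2
      · rw [entropyU]
        apply csSup_le
        · exact ⟨∑ i, Real.log (Φ i), Φ, hΦpos, hs1, hs2, rfl⟩
        · rintro s ⟨p', g1, g2, g3, rfl⟩
          exact hub p' g1 g2 g3
    obtain ⟨y1, y2, y3, y4⟩ := hp y h3
    exact max_unique a y (p y) Φ y1 y2 y3 y4 hΦpos hs1 hs2 hentΦ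
  -- the derivative of the explicit maximizer
  have hmder : HasFDerivAt (fun y : E => ((1:ℝ), y)) (ContinuousLinearMap.inr ℝ ℝ E) x := by
    have h : HasFDerivAt (fun y : E => ((1:ℝ), y))
        ((0 : E →L[ℝ] ℝ).prod (ContinuousLinearMap.id ℝ E)) x :=
      (hasFDerivAt_const (1:ℝ) x).prodMk (hasFDerivAt_id x)
    convert h using 1
    rfl
  set M : E →L[ℝ] ℝ × E :=
    ((Deq.symm : (ℝ × E) →L[ℝ] ℝ × E)).comp (ContinuousLinearMap.inr ℝ ℝ E) with hM
  have hcomp : HasFDerivAt (fun y : E => Ψ ((1:ℝ), y)) M x :=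
    (hΨderiv.hasFDerivAt).comp x hmder
  set C : Fin n → E →L[ℝ] ℝ := fun k => ((-(p x k) ^ 2) • ℓ k).comp M with hC
  have hCk : ∀ k, HasFDerivAt (fun y : E => (ℓ k (Ψ ((1:ℝ), y)))⁻¹) (C k) x := by
    intro k
    have hinv' : HasFDerivAt (fun θ => (ℓ k θ)⁻¹) ((-(p x k) ^ 2) • ℓ k) (Ψ ((1:ℝ), x)) := by
      rw [hΨx]
      exact (hinv k).hasFDerivAt
    exact hinv'.comp x hcomp
  have hfder : ∀ k, fderiv ℝ (fun y => p y k) x = C k := by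
    intro k
    have hek : (fun y => p y k) =ᶠ[nhds x] fun y => (ℓ k (Ψ ((1:ℝ), y)))⁻¹ :=
      evMain.mono fun y hy => congrFun hy k
    rw [hek.fderiv_eq]
    exact (hCk k).fderiv
  have hsum0 : (∑ k, C k) = 0 := by
    have hS : HasFDerivAt (fun y : E => ∑ k, (ℓ k (Ψ ((1:ℝ), y)))⁻¹) (∑ k, C k) x :=
      HasFDerivAt.fun_sum fun k _ => hCk k
    have hE : (fun _ : E => (1:ℝ)) =ᶠ[nhds x] fun y : E => ∑ k, (ℓ k (Ψ ((1:ℝ), y)))⁻¹ := by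
      filter_upwards [ev1] with y h1
      simp only [hg] at h1
      exact (congrArg Prod.fst h1).symm
    exact (hS.congr_of_eventuallyEq hE).unique (hasFDerivAt_const 1 x)
  have hid : (∑ k, (C k).smulRight (a k)) = ContinuousLinearMap.id ℝ E := by
    have hS : HasFDerivAt (fun y : E => ∑ k, (ℓ k (Ψ ((1:ℝ), y)))⁻¹ • a k)
        (∑ k, (C k).smulRight (a k)) x := by
      apply HasFDerivAt.fun_sum
      intro k _
      have h := (hCk k).smul (hasFDerivAt_const (a k) x)
      convert h using 1
      · rfl
      exact ContinuousLinearMap.ext fun v => by simp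
    have hE : (fun y : E => y) =ᶠ[nhds x] fun y : E => ∑ k, (ℓ k (Ψ ((1:ℝ), y)))⁻¹ • a k := by
      filter_upwards [ev1] with y h1
      simp only [hg] at h1
      exact (congrArg Prod.snd h1).symm
    exact (hS.congr_of_eventuallyEq hE).unique (hasFDerivAt_id x)
  -- conclusion
  intro ξ
  refine ⟨(M ξ).1, (M ξ).2, ?_, ?_, ?_⟩
  · intro k
    rw [hfder k]
    have : C k ξ = -(p x k) ^ 2 * ((M ξ).1 + inner ℝ (a k) (M ξ).2) := by
      simp [hC, ContinuousLinearMap.comp_apply, hℓapp, smul_eq_mul]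
    rw [this, real_inner_comm]
  · have : ∑ k, (C k) ξ = (∑ k, C k) ξ := (ContinuousLinearMap.sum_apply _ _ _).symm
    rw [Finset.sum_congr rfl fun k _ => by rw [hfder k], this, hsum0]
    rfl
  · have : ∑ k, (C k ξ) • a k = (∑ k, (C k).smulRight (a k)) ξ := by
      rw [ContinuousLinearMap.sum_apply]
      exact Finset.sum_congr rfl fun k _ => rfl
    rw [Finset.sum_congr rfl fun k _ => by rw [hfder k], this, hid]
    rfl


end AuxHelpers

/-- If `ξ = ∑ₖ qₖ (aₖ - x)`, then
`∑ₖ (p_{k(ξ)}(x))²/pₖ(x)² ≤ (n+1) ∑ₖ qₖ²/pₖ(x)²`. -/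
theorem stmt_13 {d n : ℕ} (hn : 2 ≤ n) (a : Fin n → EuclideanSpace ℝ (Fin d))
    (ha : Function.Injective a)
    (P : Set (EuclideanSpace ℝ (Fin d)))
    (hP : P = convexHull ℝ (Set.range a))
    (hvert : ∀ i, a i ∈ Set.extremePoints ℝ P)
    (hint : (interior P).Nonempty)
    (p : EuclideanSpace ℝ (Fin d) → Fin n → ℝ)
    (hp : ∀ x ∈ interior P, (∀ i, 0 < p x i) ∧ ∑ i, p x i = 1 ∧
      ∑ i, p x i • a i = x ∧ ∑ i, Real.log (p x i) = entropyU a x) :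
    ∀ x ∈ interior P, ∀ q : Fin n → ℝ, ∀ ξ : EuclideanSpace ℝ (Fin d),
      ξ = ∑ k, q k • (a k - x) →
      ∑ k, (fderiv ℝ (fun y => p y k) x ξ) ^ 2 / (p x k) ^ 2
        ≤ ((n : ℝ) + 1) * ∑ k, (q k) ^ 2 / (p x k) ^ 2 := by
  intro x hx q ξ hξ
  have hn0 : 0 < n := lt_of_lt_of_le (by norm_num) hn
  have hspan : affineSpan ℝ (Set.range a) = ⊤ := by
    have h1 : affineSpan ℝ (convexHull ℝ (Set.range a)) = ⊤ :=
      ((convex_convexHull ℝ _).interior_nonempty_iff_affineSpan_eq_top).mp (hP ▸ hint)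
    rwa [affineSpan_convexHull] at h1
  obtain ⟨γ, b, hA, hB, hC⟩ := main_deriv a hn0 hspan (interior P) isOpen_interior x hx p hp ξ
  obtain ⟨hpos, hsum, hmom, -⟩ := hp x hx
  set c : Fin n → ℝ := fun k => fderiv ℝ (fun y => p y k) x ξ with hc
  set Bv : Fin n → ℝ := fun k => inner ℝ b (a k - x) with hBv
  set γ' : ℝ := γ + inner ℝ b x with hγ'
  set w : Fin n → ℝ := fun k => p x k * (γ' + Bv k) with hw
  have hlin : ∀ r : Fin n → ℝ, ∑ k, r k * Bv k = inner ℝ b (∑ k, r k • a k - (∑ k, r k) • x) := by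
    intro r
    have h1 : ∑ k, r k • (a k - x) = ∑ k, r k • a k - (∑ k, r k) • x := by
      rw [Finset.sum_smul]
      rw [← Finset.sum_sub_distrib]
      exact Finset.sum_congr rfl fun k _ => smul_sub (r k) (a k) x
    rw [← h1, inner_sum]
    exact Finset.sum_congr rfl fun k _ => by rw [real_inner_smul_right, hBv]
  have haff : ∀ k, γ + inner ℝ b (a k) = γ' + Bv k := by
    intro k
    rw [hγ', hBv]
    simp only [inner_sub_right]
    ring
  have hcw : ∀ k, c k = -(p x k) * w k := by
    intro k
    have h0 : c k = fderiv ℝ (fun y => p y k) x ξ := rfl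
    rw [h0, hA k, haff k]
    simp only [hw]
    ring
  have hpw : ∑ k, p x k * w k = 0 := by
    have h1 : ∑ k, c k = 0 := hB
    have h2 : ∀ k, p x k * w k = -c k := fun k => by rw [hcw k]; ring
    rw [Finset.sum_congr rfl fun k _ => h2 k, Finset.sum_neg_distrib, h1, neg_zero]
  have hpB : ∑ k, p x k * Bv k = 0 := by
    rw [hlin (p x), hmom, hsum, one_smul, sub_self, inner_zero_right]
  have hqc : ∑ k, q k * Bv k = -∑ k, (p x k * w k) * Bv k := by
    have h1 : ∑ k, q k * Bv k = inner ℝ b ξ := by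
      rw [hlin q]
      congr 1
      rw [hξ, Finset.sum_smul, ← Finset.sum_sub_distrib]
      exact Finset.sum_congr rfl fun k _ => (smul_sub (q k) (a k) x).symm
    have h2 : ∀ k, (p x k * w k) * Bv k = -(c k * Bv k) := fun k => by rw [hcw k]; ring
    have h3 : ∑ k, c k * Bv k = inner ℝ b ξ := by
      rw [hlin c, hB, zero_smul, sub_zero, hC]
    rw [h1, Finset.sum_congr rfl fun k _ => h2 k, Finset.sum_neg_distrib, h3, neg_neg]
  have hcore := core_ineq (p x) w q Bv γ' hpos hsum (fun k => rfl) hpw hpB hqc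
  have hLHS : ∑ k, (c k) ^ 2 / (p x k) ^ 2 = ∑ k, (w k) ^ 2 := by
    refine Finset.sum_congr rfl fun k _ => ?_
    rw [hcw k]
    have hpk : (p x k) ^ 2 ≠ 0 := pow_ne_zero 2 (hpos k).ne'
    field_simp
    exact mul_div_cancel_left₀ _ (hpos k).ne'
  calc ∑ k, (fderiv ℝ (fun y => p y k) x ξ) ^ 2 / (p x k) ^ 2
      = ∑ k, (c k) ^ 2 / (p x k) ^ 2 := rfl
    _ = ∑ k, (w k) ^ 2 := hLHS
    _ ≤ ((n : ℝ) + 1) * ∑ k, (q k) ^ 2 / (p x k) ^ 2 := hcore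
end

section
/- For the entropy-maximizing weights $p_k$ on the interior of a polytope with vertices $a_1,\dots,a_n$, the directional derivative along the vector from $x$ toward the vertex satisfies $|p_{k(a_k - x)}(x)| \le (n+1)^{1/2}$ for every interior point $x$ and every $k$. -/
open Finset

lemma aux_foc {d n : ℕ} (a : Fin n → EuclideanSpace ℝ (Fin d)) (y : EuclideanSpace ℝ (Fin d))
    (q : Fin n → ℝ) (hq : ∀ i, 0 < q i)
    (hq1 : ∑ i, q i = 1) (hqa : ∑ i, q i • a i = y)
    (hmax : ∀ r : Fin n → ℝ, (∀ i, 0 < r i) → ∑ i, r i = 1 → ∑ i, r i • a i = y →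
      ∑ i, Real.log (r i) ≤ ∑ i, Real.log (q i))
    (w : Fin n → ℝ) (hw1 : ∑ i, w i = 0) (hwa : ∑ i, w i • a i = 0) :
    ∑ i, w i / q i = 0 := by
  have hder : HasDerivAt (fun ε : ℝ => ∑ i, Real.log (q i + ε * w i)) (∑ i, w i / q i) 0 := by
    apply HasDerivAt.fun_sum
    intro i _
    have h1 : HasDerivAt (fun ε : ℝ => q i + ε * w i) (w i) 0 := by
      simpa using ((hasDerivAt_id (0:ℝ)).mul_const (w i)).const_add (q i)
    have h2 := h1.log (by simpa using (hq i).ne')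
    simpa using h2
  have hloc : IsLocalMax (fun ε : ℝ => ∑ i, Real.log (q i + ε * w i)) 0 := by
    have hev : ∀ᶠ ε : ℝ in nhds 0, ∀ i, 0 < q i + ε * w i := by
      rw [Filter.eventually_all]
      intro i
      have hc : Filter.Tendsto (fun ε : ℝ => q i + ε * w i) (nhds 0) (nhds (q i)) := by
        have : Filter.Tendsto (fun ε : ℝ => q i + ε * w i) (nhds 0) (nhds (q i + 0 * w i)) :=
          (continuous_const.add (continuous_id.mul continuous_const)).tendsto 0
        simpa using this
      exact hc.eventually (eventually_gt_nhds (hq i))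
    filter_upwards [hev] with ε hε
    have h1 : ∑ i, (q i + ε * w i) = 1 := by
      rw [Finset.sum_add_distrib, hq1, ← Finset.mul_sum, hw1]; ring
    have h2 : ∑ i, (q i + ε * w i) • a i = y := by
      have : ∑ i, (q i + ε * w i) • a i = ∑ i, q i • a i + ε • ∑ i, w i • a i := by
        rw [Finset.smul_sum, ← Finset.sum_add_distrib]
        exact Finset.sum_congr rfl fun i _ => by rw [add_smul, smul_smul]
      rw [this, hqa, hwa, smul_zero, add_zero]
    have := hmax (fun i => q i + ε * w i) hε h1 h2
    simpa using this
  exact hloc.hasDerivAt_eq_zero hder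


lemma aux_le {d n : ℕ} (a : Fin n → EuclideanSpace ℝ (Fin d)) (y : EuclideanSpace ℝ (Fin d))
    (r : Fin n → ℝ) (hr : ∀ i, 0 < r i) (hr1 : ∑ i, r i = 1) (hra : ∑ i, r i • a i = y) :
    ∑ i, Real.log (r i) ≤ entropyU a y := by
  rw [entropyU]
  apply le_csSup
  · refine ⟨0, ?_⟩
    rintro s ⟨p, hp0, hp1, -, rfl⟩
    apply Finset.sum_nonpos
    intro i _
    apply Real.log_nonpos (hp0 i).le
    calc p i ≤ ∑ j, p j := Finset.single_le_sum (fun j _ => (hp0 j).le) (Finset.mem_univ i)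
    _ = 1 := hp1
  · exact ⟨r, hr, hr1, hra, rfl⟩


lemma arith_key (nn t qk rk S : ℝ) (hn2 : 2 ≤ nn) (ht : 0 < t) (ht1 : t ≤ 1/2)
    (htq : t ≤ qk / (2*(2*nn+1)))
    (hq : 0 < qk) (hq1 : qk ≤ 1) (hr : 0 < rk) (hr1 : rk ≤ 1) (hS0 : 0 ≤ S)
    (hpoly : (1-t)*((qk*rk)*S) = (1-t)*t*rk - t*qk + nn*t^2*(qk*rk))
    (hEsq : (rk - qk)^2 ≤ (qk*rk)*S) :
    qk^2 * S ≤ (8*nn+2)*t^2 := by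
  have ht1' : (0:ℝ) < 1 - t := by linarith
  have hqkrk1 : qk * rk ≤ 1 := mul_le_one₀ hq1 hr.le hr1
  have e1 : nn*t^2*(qk*rk) ≤ nn*t^2 := by
    nlinarith [mul_nonneg (mul_nonneg (show (0:ℝ) ≤ nn by linarith) (sq_nonneg t))
      (show (0:ℝ) ≤ 1 - qk*rk by linarith)]
  have e3 : (0:ℝ) ≤ (1-2*t)*(nn*t^2) :=
    mul_nonneg (by linarith) (mul_nonneg (by linarith) (sq_nonneg t))
  have e4 : (0:ℝ) ≤ t^2 * qk := mul_nonneg (sq_nonneg t) hq.le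
  have hE2 : (rk - qk)^2 ≤ t*(rk - qk) + 2*nn*t^2 := by
    have h1 : (1-t)*((rk - qk)^2) ≤ (1-t)*((qk*rk)*S) :=
      mul_le_mul_of_nonneg_left hEsq ht1'.le
    rw [hpoly] at h1
    have hstep : (1-t)*((rk - qk)^2) ≤ (1-t)*(t*(rk - qk) + 2*nn*t^2) := by
      nlinarith [h1, e1, e3, e4]
    exact (mul_le_mul_iff_right₀ ht1').mp hstep
  have hEabs : |rk - qk| ≤ (2*nn+1)*t := by
    have hA2 : |rk - qk|^2 ≤ t*|rk - qk| + 2*nn*t^2 := by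
      rw [sq_abs]
      have h1 : t*(rk - qk) ≤ t*|rk - qk| :=
        mul_le_mul_of_nonneg_left (le_abs_self _) ht.le
      linarith [hE2]
    have hsq : (|rk - qk| - t/2)^2 ≤ ((2*nn+1/2)*t)^2 := by
      nlinarith [hA2, mul_nonneg (mul_nonneg (show (0:ℝ) ≤ nn by linarith)
        (show (0:ℝ) ≤ nn by linarith)) (sq_nonneg t)]
    have h5 := abs_le_of_sq_le_sq' hsq
      (mul_nonneg (by linarith : (0:ℝ) ≤ 2*nn+1/2) ht.le)
    linarith [h5.2]
  have hrk2 : qk / 2 ≤ rk := by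
    have h := (abs_le.mp hEabs).1
    have : (2*nn+1)*t ≤ qk / 2 := by
      rw [le_div_iff₀ (by positivity : (0:ℝ) < 2*(2*nn+1))] at htq
      nlinarith [htq]
    linarith
  have hqrS : (qk*rk) * S ≤ (4*nn+1)*t^2 := by
    have hup := (abs_le.mp hEabs).2
    have e5 : (1-t)*t*rk ≤ (1-t)*t*(qk + (2*nn+1)*t) :=
      mul_le_mul_of_nonneg_left (by linarith) (mul_nonneg ht1'.le ht.le)
    have hstep : (1-t)*((qk*rk) * S) ≤ (1-t)*((4*nn+1)*t^2) := by
      nlinarith [hpoly, e5, e1, e3, e4]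
    exact (mul_le_mul_iff_right₀ ht1').mp hstep
  have h1 : qk * qk ≤ 2 * (qk * rk) := by nlinarith [hrk2, hq]
  have h2 := mul_le_mul_of_nonneg_right h1 hS0
  nlinarith [h2, hqrS]

lemma arith_coord (nn t qk qj rj S : ℝ) (hqj : 0 < qj) (hrj : 0 < rj)
    (hqj1 : qj ≤ 1) (hrj1 : rj ≤ 1) (hqk : 0 < qk) (hS0 : 0 ≤ S)
    (hj : (rj - qj)^2 / (qj * rj) ≤ S)
    (h2 : qk^2 * S ≤ (8*nn+2)*t^2) (hn2 : 2 ≤ nn) (ht : 0 < t) :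
    |rj - qj| ≤ (Real.sqrt (8*nn+2) / qk) * t := by
  have hqrj : 0 < qj*rj := mul_pos hqj hrj
  rw [div_le_iff₀ hqrj] at hj
  have hjr1 : qj*rj ≤ 1 := mul_le_one₀ hqj1 hrj.le hrj1
  have hjsq : (rj-qj)^2 ≤ S := by
    nlinarith [hj, mul_nonneg (show (0:ℝ) ≤ 1 - qj*rj by linarith) hS0]
  have hM2 : ((Real.sqrt (8*nn+2)/qk)*t)^2 = ((8*nn+2)*t^2)/qk^2 := by
    rw [mul_pow, div_pow, Real.sq_sqrt (by linarith : (0:ℝ) ≤ 8*nn+2)]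
    ring
  have hfin : (rj - qj)^2 ≤ ((Real.sqrt (8*nn+2)/qk)*t)^2 := by
    rw [hM2, le_div_iff₀ (pow_pos hqk 2)]
    nlinarith [h2, mul_nonneg (sub_nonneg.mpr hjsq) (sq_nonneg qk)]
  have h5 := abs_le_of_sq_le_sq' hfin
    (mul_nonneg (div_nonneg (Real.sqrt_nonneg _) hqk.le) ht.le)
  exact abs_le.mpr h5

set_option maxHeartbeats 1000000 in
/-- `|p_{k(aₖ - x)}(x)| ≤ (n+1)^{1/2}` for every interior point `x` and every `k`. -/
theorem stmt_14 {d n : ℕ} (hn : 2 ≤ n) (a : Fin n → EuclideanSpace ℝ (Fin d))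
    (ha : Function.Injective a)
    (P : Set (EuclideanSpace ℝ (Fin d)))
    (hP : P = convexHull ℝ (Set.range a))
    (hvert : ∀ i, a i ∈ Set.extremePoints ℝ P)
    (hint : (interior P).Nonempty)
    (p : EuclideanSpace ℝ (Fin d) → Fin n → ℝ)
    (hp : ∀ x ∈ interior P, (∀ i, 0 < p x i) ∧ ∑ i, p x i = 1 ∧
      ∑ i, p x i • a i = x ∧ ∑ i, Real.log (p x i) = entropyU a x) :
    ∀ x ∈ interior P, ∀ k,
      |fderiv ℝ (fun y => p y k) x (a k - x)| ≤ Real.sqrt ((n : ℝ) + 1) := by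
  -- first-order conditions at any interior point
  have foc : ∀ y ∈ interior P, ∀ w : Fin n → ℝ, ∑ i, w i = 0 → ∑ i, w i • a i = 0 →
      ∑ i, w i / p y i = 0 := by
    intro y hy w hw1 hwa
    obtain ⟨h0, h1, h2, h3⟩ := hp y hy
    refine aux_foc a y _ h0 h1 h2 (fun r hr hr1 hra => ?_) w hw1 hwa
    exact (aux_le a y r hr hr1 hra).trans_eq h3.symm
  intro x hx k
  by_cases hdiff : DifferentiableAt ℝ (fun y => p y k) x
  swap
  · rw [fderiv_zero_of_not_differentiableAt hdiff]
    simpa using Real.sqrt_nonneg ((n:ℝ)+1)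
  set L := fderiv ℝ (fun y => p y k) x (a k - x) with hLdef
  obtain ⟨hq0, hq1, hqa, -⟩ := hp x hx
  set q : Fin n → ℝ := p x with hqdef
  have hqk1 : q k ≤ 1 := by
    calc q k ≤ ∑ j, q j := Finset.single_le_sum (fun j _ => (hq0 j).le) (Finset.mem_univ k)
    _ = 1 := hq1
  -- the line from x toward a k
  set γ : ℝ → EuclideanSpace ℝ (Fin d) := fun t => x + t • (a k - x) with hγdef
  have hγ0 : γ 0 = x := by simp [hγdef]
  have hγcont : Continuous γ := by
    apply continuous_const.add (continuous_id.smul continuous_const)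
  -- a small δ₀ so that γ t stays interior
  obtain ⟨δ₀, hδ₀, hδ₀int⟩ : ∃ δ₀ > 0, ∀ t : ℝ, |t| < δ₀ → γ t ∈ interior P := by
    have : ∀ᶠ t : ℝ in nhds 0, γ t ∈ interior P := by
      have := (hγcont.tendsto 0).eventually (isOpen_interior.eventually_mem (hγ0 ▸ hx))
      simpa using this
    rw [Metric.eventually_nhds_iff] at this
    obtain ⟨ε, hε, h⟩ := this
    exact ⟨ε, hε, fun t ht => h (by simpa [Real.dist_eq] using ht)⟩
  -- admissible parameter range
  set δ₁ : ℝ := min δ₀ (min (1/2) (q k / (2*(2*(n:ℝ)+1)))) with hδ₁def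
  have hn2 : (2:ℝ) ≤ (n:ℝ) := by exact_mod_cast hn
  have hδ₁pos : 0 < δ₁ := by
    refine lt_min hδ₀ (lt_min (by norm_num) (div_pos (hq0 k) (by positivity)))
  set M : ℝ := Real.sqrt (8*(n:ℝ)+2) / q k with hMdef
  have hMpos : 0 < M :=
    div_pos (Real.sqrt_pos.mpr (by positivity)) (hq0 k)
  have key : ∀ t : ℝ, 0 < t → t < δ₁ → ∀ j, |p (γ t) j - q j| ≤ M * t := by
    intro t ht htδ j
    have ht1 : t ≤ 1/2 := le_of_lt (lt_of_lt_of_le htδ ((min_le_right _ _).trans (min_le_left _ _)))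
    have htq : t ≤ q k / (2*(2*(n:ℝ)+1)) :=
      le_of_lt (lt_of_lt_of_le htδ ((min_le_right _ _).trans (min_le_right _ _)))
    have hmem : γ t ∈ interior P := hδ₀int t (by
      rw [abs_of_pos ht]; exact lt_of_lt_of_le htδ (min_le_left _ _))
    obtain ⟨hr0, hr1, hra, -⟩ := hp (γ t) hmem
    set r : Fin n → ℝ := p (γ t) with hrdef
    have hrk1 : r k ≤ 1 := by
      calc r k ≤ ∑ i, r i := Finset.single_le_sum (fun i _ => (hr0 i).le) (Finset.mem_univ k)
      _ = 1 := hr1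
    set wA : Fin n → ℝ := fun i => r i - t * (if i = k then 1 else 0) - (1-t) * q i with hwAdef
    have hwA1 : ∑ i, wA i = 0 := by
      simp only [hwAdef, Finset.sum_sub_distrib, ← Finset.mul_sum, hr1, hq1]
      simp
    have hwAa : ∑ i, wA i • a i = 0 := by
      have h1 : ∀ i, wA i • a i
          = r i • a i - (t * (if i = k then 1 else 0)) • a i - ((1-t) * q i) • a i := by
        intro i; simp only [hwAdef, sub_smul]
      rw [Finset.sum_congr rfl (fun i _ => h1 i), Finset.sum_sub_distrib, Finset.sum_sub_distrib]
      have h2 : ∑ i, (t * (if i = k then 1 else 0)) • a i = t • a k := by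
        have : ∀ i, (t * (if i = k then 1 else 0)) • a i
            = (if i = k then t • a i else 0) := by
          intro i; split <;> simp [*]
        rw [Finset.sum_congr rfl (fun i _ => this i), Finset.sum_ite_eq' Finset.univ k]
        simp
      have h3 : ∑ i, ((1-t) * q i) • a i = (1-t) • x := by
        rw [← hqa, Finset.smul_sum]
        exact Finset.sum_congr rfl fun i _ => by rw [mul_smul]
      rw [h2, h3, hra, hγdef]
      simp only [smul_sub, sub_smul, one_smul]
      abel
    have focA := foc x hx wA hwA1 hwAa
    have focB := foc (γ t) hmem wA hwA1 hwAa
    have expand : ∀ s : Fin n → ℝ, (∀ i, s i ≠ 0) →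
        ∑ i, wA i / s i = (∑ i, r i / s i) - t * (1 / s k) - (1-t) * ∑ i, q i / s i := by
      intro s hs
      have h1 : ∀ i, wA i / s i
          = r i / s i - t * ((if i = k then 1 else 0) / s i) - (1-t) * (q i / s i) := by
        intro i; simp only [hwAdef]; ring
      rw [Finset.sum_congr rfl (fun i _ => h1 i), Finset.sum_sub_distrib, Finset.sum_sub_distrib,
        ← Finset.mul_sum, ← Finset.mul_sum]
      congr 2
      have : ∀ i, (if i = k then (1:ℝ) else 0) / s i = (if i = k then 1 / s i else 0) := by
        intro i; split <;> simp
      rw [Finset.sum_congr rfl (fun i _ => this i), Finset.sum_ite_eq' Finset.univ k]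
      simp
    have hqq : ∑ i, q i / q i = (n:ℝ) := by
      rw [Finset.sum_congr rfl (fun i _ => div_self (hq0 i).ne')]
      simp
    have hrr : ∑ i, r i / r i = (n:ℝ) := by
      rw [Finset.sum_congr rfl (fun i _ => div_self (hr0 i).ne')]
      simp
    have hqkne : q k ≠ 0 := (hq0 k).ne'
    have hrkne : r k ≠ 0 := (hr0 k).ne'
    have EA : ∑ i, r i / q i = t / q k + (1-t) * n := by
      have h := expand q (fun i => (hq0 i).ne')
      rw [focA, hqq] at h
      have : ∑ i, r i / q i = t * (1 / q k) + (1-t) * n := by linarith [h.symm]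
      rw [this]; ring
    have EB : (n:ℝ) - t / r k - (1-t) * ∑ i, q i / r i = 0 := by
      have h := expand r (fun i => (hr0 i).ne')
      rw [focB, hrr] at h
      have h' := h.symm
      have : t * (1 / r k) = t / r k := by ring
      linarith [h']
    set S : ℝ := ∑ i, (r i - q i)^2 / (q i * r i) with hSdef
    have hS0 : 0 ≤ S := Finset.sum_nonneg fun i _ =>
      div_nonneg (sq_nonneg _) (mul_pos (hq0 i) (hr0 i)).le
    have hSsplit : S = (∑ i, r i / q i) + (∑ i, q i / r i) - 2*n := by
      have h1 : ∀ i, (r i - q i)^2 / (q i * r i) = r i / q i + q i / r i - 2 := by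
        intro i
        have h2 : q i ≠ 0 := (hq0 i).ne'
        have h3 : r i ≠ 0 := (hr0 i).ne'
        field_simp
        ring
      rw [hSdef, Finset.sum_congr rfl (fun i _ => h1 i)]
      rw [Finset.sum_sub_distrib, Finset.sum_add_distrib]
      simp [mul_comm]
    have ht1' : (0:ℝ) < 1 - t := by linarith
    have hQr : ∑ i, q i / r i = ((n:ℝ) - t / r k) / (1-t) := by
      rw [eq_div_iff ht1'.ne']
      linarith [EB]
    have hSval : S = (t / q k + (1-t) * n) + ((n:ℝ) - t / r k) / (1-t) - 2*n := by
      rw [hSsplit, EA, hQr]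
    have hpoly : (1-t) * ((q k * r k) * S)
        = (1-t)*t*(r k) - t*(q k) + (n:ℝ)*t^2*(q k * r k) := by
      rw [hSval]
      field_simp
      ring
    have hsingle : (r k - q k)^2 / (q k * r k) ≤ S :=
      Finset.single_le_sum (f := fun i => (r i - q i)^2 / (q i * r i))
        (fun i _ => div_nonneg (sq_nonneg _) (mul_pos (hq0 i) (hr0 i)).le)
        (Finset.mem_univ k)
    have hqrk : 0 < q k * r k := mul_pos (hq0 k) (hr0 k)
    have hEsq : (r k - q k)^2 ≤ (q k * r k) * S := by
      rw [div_le_iff₀ hqrk] at hsingle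
      linarith [hsingle]
    have hq2S : q k^2 * S ≤ (8*(n:ℝ)+2)*t^2 := by
      exact arith_key (n:ℝ) t (q k) (r k) S hn2 ht ht1 htq (hq0 k) hqk1 (hr0 k) hrk1 hS0 hpoly hEsq
    have hj1 : (r j - q j)^2 / (q j * r j) ≤ S :=
      Finset.single_le_sum (f := fun i => (r i - q i)^2 / (q i * r i))
        (fun i _ => div_nonneg (sq_nonneg _) (mul_pos (hq0 i) (hr0 i)).le)
        (Finset.mem_univ j)
    have hqj1 : q j ≤ 1 := by
      calc q j ≤ ∑ i, q i := Finset.single_le_sum (fun i _ => (hq0 i).le) (Finset.mem_univ j)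
      _ = 1 := hq1
    have hrj1 : r j ≤ 1 := by
      calc r j ≤ ∑ i, r i := Finset.single_le_sum (fun i _ => (hr0 i).le) (Finset.mem_univ j)
      _ = 1 := hr1
    have hfin := arith_coord (n:ℝ) t (q k) (q j) (r j) S (hq0 j) (hr0 j) hqj1 hrj1
      (hq0 k) hS0 hj1 hq2S hn2 ht
    have hMeq : Real.sqrt (8*(n:ℝ)+2) / q k = M := by rw [hMdef]
    rw [hMeq] at hfin
    exact hfin
  -- sequence of parameters tending to 0
  set tseq : ℕ → ℝ := fun i => δ₁ / (i + 2) with htseqdef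
  have htpos : ∀ i, 0 < tseq i := fun i => div_pos hδ₁pos (by positivity)
  have htlt : ∀ i, tseq i < δ₁ := by
    intro i
    rw [htseqdef]
    simp only
    rw [div_lt_iff₀ (by positivity : (0:ℝ) < (i:ℝ)+2)]
    nlinarith [hδ₁pos, (show (0:ℝ) ≤ (i:ℝ) by positivity)]
  have htto : Filter.Tendsto tseq Filter.atTop (nhds 0) := by
    apply Filter.Tendsto.div_atTop (tendsto_const_nhds)
    exact Filter.tendsto_atTop_add_const_right _ 2 tendsto_natCast_atTop_atTop
  have hmemseq : ∀ i, γ (tseq i) ∈ interior P := by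
    intro i
    apply hδ₀int
    rw [abs_of_pos (htpos i)]
    exact lt_of_lt_of_le (htlt i) (min_le_left _ _)
  -- the difference quotients
  set u : ℕ → (Fin n → ℝ) := fun i j => (p (γ (tseq i)) j - q j) / tseq i with hudef
  have hubound : ∀ i, u i ∈ Metric.closedBall (0 : Fin n → ℝ) M := by
    intro i
    rw [Metric.mem_closedBall, dist_zero_right]
    rw [pi_norm_le_iff_of_nonneg hMpos.le]
    intro j
    rw [Real.norm_eq_abs, hudef]
    simp only
    rw [abs_div, abs_of_pos (htpos i), div_le_iff₀ (htpos i)]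
    exact key (tseq i) (htpos i) (htlt i) j
  obtain ⟨v, hv, φ, hφmono, hφtend⟩ :=
    (isCompact_closedBall (0 : Fin n → ℝ) M).tendsto_subseq hubound
  set sseq : ℕ → ℝ := fun i => tseq (φ i) with hsdef
  have hspos : ∀ i, 0 < sseq i := fun i => htpos (φ i)
  have hsto : Filter.Tendsto sseq Filter.atTop (nhds 0) := by
    apply squeeze_zero (fun i => (hspos i).le) (fun i => ?_) htto
    rw [hsdef, htseqdef]
    simp only
    apply div_le_div_of_nonneg_left hδ₁pos.le (by positivity)
    have := hφmono.le_apply (x := i)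
    push_cast
    linarith [(Nat.cast_le (α := ℝ)).mpr this]
  have hcoord : ∀ j, Filter.Tendsto (fun i => u (φ i) j) Filter.atTop (nhds (v j)) :=
    fun j => tendsto_pi_nhds.mp hφtend j
  have hrmem : ∀ i, γ (sseq i) ∈ interior P := fun i => hmemseq (φ i)
  have hrval : ∀ i j, p (γ (sseq i)) j = q j + u (φ i) j * sseq i := by
    intro i j
    rw [hudef]
    simp only
    rw [div_mul_cancel₀ _ (hspos i).ne']
    ring
  have hrconv : ∀ j, Filter.Tendsto (fun i => p (γ (sseq i)) j) Filter.atTop (nhds (q j)) := by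
    intro j
    have h1 : Filter.Tendsto (fun i => q j + u (φ i) j * sseq i) Filter.atTop
        (nhds (q j + v j * 0)) := tendsto_const_nhds.add ((hcoord j).mul hsto)
    rw [mul_zero, add_zero] at h1
    exact h1.congr (fun i => (hrval i j).symm)
  -- v k = L
  have hvk : v k = L := by
    have hγd : HasDerivAt γ (a k - x) 0 := by
      have h1 : HasDerivAt (fun t : ℝ => t • (a k - x)) (a k - x) 0 := by
        simpa using (hasDerivAt_id (0:ℝ)).smul_const (a k - x)
      simpa [hγdef] using h1.const_add x
    have hd : HasDerivAt (fun t => p (γ t) k) L 0 := by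
      have h2 : HasFDerivAt (fun y => p y k) (fderiv ℝ (fun y => p y k) x) (γ 0) := by
        rw [hγ0]; exact hdiff.hasFDerivAt
      exact h2.comp_hasDerivAt 0 hγd
    have hslope := hasDerivAt_iff_tendsto_slope.mp hd
    have hs0 : Filter.Tendsto sseq Filter.atTop (nhdsWithin 0 {(0:ℝ)}ᶜ) := by
      rw [tendsto_nhdsWithin_iff]
      exact ⟨hsto, Filter.Eventually.of_forall fun i => (hspos i).ne'⟩
    have hcomp := hslope.comp hs0
    have heq : ∀ i, slope (fun t => p (γ t) k) 0 (sseq i) = u (φ i) k := by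
      intro i
      rw [slope_def_field, hudef]
      simp only [hγ0]
      rw [hqdef]
      simp only [hsdef]
      ring_nf
    exact tendsto_nhds_unique (hcoord k) (hcomp.congr heq)
  -- sum of v is 0
  have hvsum : ∑ j, v j = 0 := by
    have h1 : ∀ i, ∑ j, u (φ i) j = 0 := by
      intro i
      rw [hudef]
      simp only
      rw [← Finset.sum_div, Finset.sum_sub_distrib, (hp _ (hrmem i)).2.1, hq1]
      simp
    have h2 := tendsto_finset_sum Finset.univ (fun j (_ : j ∈ Finset.univ) => hcoord j)
    have h3 : Filter.Tendsto (fun i => ∑ j, u (φ i) j) Filter.atTop (nhds 0) := by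
      rw [Filter.tendsto_congr h1]; exact tendsto_const_nhds
    exact tendsto_nhds_unique h2 h3
  -- barycenter identity for v
  have hvbary : ∑ j, v j • a j = a k - x := by
    have h1 : ∀ i, ∑ j, u (φ i) j • a j = a k - x := by
      intro i
      have e1 : ∀ j, u (φ i) j • a j = (sseq i)⁻¹ • ((p (γ (sseq i)) j - q j) • a j) := by
        intro j
        rw [hudef]
        simp only
        rw [smul_smul, div_eq_mul_inv, mul_comm]
      rw [Finset.sum_congr rfl (fun j _ => e1 j), ← Finset.smul_sum]
      have e2 : ∑ j, (p (γ (sseq i)) j - q j) • a j = sseq i • (a k - x) := by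
        have e3 : ∀ j, (p (γ (sseq i)) j - q j) • a j = p (γ (sseq i)) j • a j - q j • a j :=
          fun j => sub_smul _ _ _
        rw [Finset.sum_congr rfl (fun j _ => e3 j), Finset.sum_sub_distrib,
          (hp _ (hrmem i)).2.2.1, hqa, hγdef]
        simp
      rw [e2, smul_smul, inv_mul_cancel₀ (hspos i).ne', one_smul]
    have h2 := tendsto_finset_sum Finset.univ
      (fun j (_ : j ∈ Finset.univ) => (hcoord j).smul_const (a j))
    exact tendsto_nhds_unique h2 (by rw [Filter.tendsto_congr h1]; exact tendsto_const_nhds)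
  -- orthogonality relation
  have horthog : ∀ w : Fin n → ℝ, ∑ j, w j = 0 → ∑ j, w j • a j = 0 →
      ∑ j, w j * v j / (q j * q j) = 0 := by
    intro w hw1 hwa
    have h1 : ∀ i, ∑ j, w j * u (φ i) j / (q j * p (γ (sseq i)) j) = 0 := by
      intro i
      have f1 := foc x hx w hw1 hwa
      have f2 := foc (γ (sseq i)) (hrmem i) w hw1 hwa
      have e1 : ∀ j, w j * u (φ i) j / (q j * p (γ (sseq i)) j)
          = (w j / q j - w j / p (γ (sseq i)) j) / sseq i := by
        intro j
        have hqj : q j ≠ 0 := (hq0 j).ne'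
        have hrj : p (γ (sseq i)) j ≠ 0 := ((hp _ (hrmem i)).1 j).ne'
        have hsi : sseq i ≠ 0 := (hspos i).ne'
        rw [hudef]
        simp only
        simp only [hsdef] at hsi hrj ⊢
        field_simp
      rw [Finset.sum_congr rfl (fun j _ => e1 j), ← Finset.sum_div, Finset.sum_sub_distrib]
      rw [← hqdef] at f1
      rw [f1, f2, sub_zero, zero_div]
    have h2 : Filter.Tendsto (fun i => ∑ j, w j * u (φ i) j / (q j * p (γ (sseq i)) j))
        Filter.atTop (nhds (∑ j, w j * v j / (q j * q j))) := by
      apply tendsto_finset_sum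
      intro j _
      apply Filter.Tendsto.div (tendsto_const_nhds.mul (hcoord j))
        (tendsto_const_nhds.mul (hrconv j))
      exact (mul_pos (hq0 j) (hq0 j)).ne'
    have h3 : Filter.Tendsto (fun i => ∑ j, w j * u (φ i) j / (q j * p (γ (sseq i)) j))
        Filter.atTop (nhds 0) := by
      rw [Filter.tendsto_congr h1]; exact tendsto_const_nhds
    exact tendsto_nhds_unique h2 h3
  -- final Cauchy-Schwarz argument
  set w0 : Fin n → ℝ := fun j => (if j = k then 1 else 0) - q j - v j with hw0def
  have hw01 : ∑ j, w0 j = 0 := by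
    rw [hw0def]
    simp only
    rw [Finset.sum_sub_distrib, Finset.sum_sub_distrib, hq1, hvsum]
    simp
  have hw0a : ∑ j, w0 j • a j = 0 := by
    have h1 : ∀ j, w0 j • a j = (if j = k then (1:ℝ) else 0) • a j - q j • a j - v j • a j := by
      intro j; rw [hw0def]; simp only [sub_smul]
    rw [Finset.sum_congr rfl (fun j _ => h1 j), Finset.sum_sub_distrib, Finset.sum_sub_distrib]
    have h2 : ∑ j, (if j = k then (1:ℝ) else 0) • a j = a k := by
      have h3 : ∀ j, (if j = k then (1:ℝ) else 0) • a j = (if j = k then a j else 0) := by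
        intro j; split <;> simp
      rw [Finset.sum_congr rfl (fun j _ => h3 j), Finset.sum_ite_eq' Finset.univ k]
      simp
    rw [h2, hqa, hvbary]
    abel
  have horth := horthog w0 hw01 hw0a
  set T : ℝ := ∑ j, (v j / q j)^2 with hTdef
  set B : ℝ := ∑ j, (((if j = k then 1 else 0) - q j) / q j)^2 with hBdef
  have hT0 : 0 ≤ T := Finset.sum_nonneg fun j _ => sq_nonneg _
  have hB0 : 0 ≤ B := Finset.sum_nonneg fun j _ => sq_nonneg _
  have hTB : T = ∑ j, ((((if j = k then 1 else 0) - q j) / q j) * (v j / q j)) := by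
    have h1 : ∀ j, w0 j * v j / (q j * q j)
        = (((if j = k then 1 else 0) - q j) / q j) * (v j / q j) - (v j / q j)^2 := by
      intro j
      have hqj : q j ≠ 0 := (hq0 j).ne'
      rw [hw0def]
      simp only
      field_simp
    rw [Finset.sum_congr rfl (fun j _ => h1 j), Finset.sum_sub_distrib] at horth
    rw [hTdef]
    linarith [horth]
  have hCS := Finset.sum_mul_sq_le_sq_mul_sq Finset.univ
    (fun j => ((if j = k then 1 else 0) - q j) / q j) (fun j => v j / q j)
  rw [← hTB, ← hBdef, ← hTdef] at hCS
  have hTle : T ≤ B := by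
    rcases eq_or_lt_of_le hT0 with h | h
    · linarith [hB0]
    · by_contra hc
      push_neg at hc
      nlinarith [hCS, h, mul_lt_mul_of_pos_right hc h]
  have hqkne' : q k ≠ 0 := (hq0 k).ne'
  have hBval : q k^2 * B = (1 - q k)^2 + ((n:ℝ)-1) * q k^2 := by
    rw [hBdef, ← Finset.sum_erase_add _ _ (Finset.mem_univ k)]
    have h1 : ∀ j ∈ Finset.univ.erase k, (((if j = k then (1:ℝ) else 0) - q j)/q j)^2 = 1 := by
      intro j hj
      have hjk := Finset.ne_of_mem_erase hj
      rw [if_neg hjk, zero_sub, neg_div, div_self (hq0 j).ne']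
      norm_num
    rw [Finset.sum_congr rfl h1, Finset.sum_const, Finset.card_erase_of_mem (Finset.mem_univ k),
      Finset.card_univ, Fintype.card_fin, if_pos rfl, div_pow, nsmul_eq_mul]
    rw [Nat.cast_sub (by omega : 1 ≤ n), Nat.cast_one]
    field_simp
    ring
  have hvkT : (v k / q k)^2 ≤ T :=
    Finset.single_le_sum (f := fun j => (v j / q j)^2) (fun j _ => sq_nonneg _)
      (Finset.mem_univ k)
  have hvk2 : (v k)^2 ≤ (n:ℝ) + 1 := by
    have h1 : (v k)^2 ≤ q k^2 * T := by
      have h := mul_le_mul_of_nonneg_left hvkT (sq_nonneg (q k))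
      have h2 : q k^2 * ((v k / q k)^2) = (v k)^2 := by
        field_simp
      linarith [h, h2]
    have h2 : q k^2 * T ≤ q k^2 * B := mul_le_mul_of_nonneg_left hTle (sq_nonneg _)
    have hqsq : q k * q k ≤ 1 := mul_le_one₀ hqk1 (hq0 k).le hqk1
    nlinarith [h1, h2, hBval, hq0 k, hqsq,
      mul_nonneg (show (0:ℝ) ≤ (n:ℝ)-1 by linarith) (show (0:ℝ) ≤ 1 - q k*q k by linarith)]
  rw [← hvk]
  have habs : |v k| = Real.sqrt ((v k)^2) := (Real.sqrt_sq_eq_abs _).symm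
  rw [habs]
  exact Real.sqrt_le_sqrt hvk2
end

section
/- Let $a_1 = 0, a_2,\dots,a_n$ be the vertices of a polytope $P$ with interior $P^o$, let $P_1$ be the polytope with vertices $a_2,\dots,a_n$ with relative interior $P_1^o$, and let $U_{n-1}$ denote the entropy function of $P_1$. Then for every $x \in P^o$ and every $\lambda > 1$ with $\lambda x \in P_1^o$, one has $U_{n-1}(\lambda x) - n\ln\lambda + \ln(\lambda - 1) \le U(x)$, with equality when $\lambda = (1 - p_1(x))^{-1}$, where $p_1(x)$ is the first entropy-maximizing weight of $x$ in $P$. -/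
open Finset

/-- The entropy function of the sub-polytope `P₁` with all vertices except `a 0`:
the supremum of `∑_{i≠0} ln pᵢ` over positive weights on these vertices
representing `y`. -/
noncomputable def entropyU1 {d n : ℕ} (a : Fin (n + 1) → EuclideanSpace ℝ (Fin d))
    (y : EuclideanSpace ℝ (Fin d)) : ℝ :=
  sSup {s | ∃ p : Fin (n + 1) → ℝ, (∀ i, i ≠ 0 → 0 < p i) ∧
    ∑ i ∈ Finset.univ.erase 0, p i = 1 ∧
    ∑ i ∈ Finset.univ.erase 0, p i • a i = y ∧
    s = ∑ i ∈ Finset.univ.erase 0, Real.log (p i)}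

open Finset

lemma exists_pos_rep {d n : ℕ} (hn : 1 ≤ n) (a : Fin (n + 1) → EuclideanSpace ℝ (Fin d)) (ha : Function.Injective a)
    (y : EuclideanSpace ℝ (Fin d))
    (hy : y ∈ intrinsicInterior ℝ (convexHull ℝ (a '' {i | i ≠ 0}))) :
    ∃ q : Fin (n + 1) → ℝ, (∀ i, i ≠ 0 → 0 < q i) ∧
      ∑ i ∈ Finset.univ.erase 0, q i = 1 ∧ ∑ i ∈ Finset.univ.erase 0, q i • a i = y := by
  classical
  -- E
  set s : Finset (Fin (n + 1)) := Finset.univ.erase 0 with hs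
  have hscard : (s.card : ℝ) = n := by
    simp [hs, Finset.card_erase_of_mem, Finset.card_univ]
  have hcardpos : (0:ℝ) < s.card := by rw [hscard]; exact_mod_cast hn
  set C := convexHull ℝ (a '' {i | i ≠ 0}) with hC
  have hset : a '' {i | i ≠ 0} = ↑(s.image a) := by
    rw [Finset.coe_image]; congr 1; ext i; simp [hs]
  -- the barycenter z
  set z : EuclideanSpace ℝ (Fin d) := ∑ i ∈ s, ((s.card : ℝ)⁻¹) • a i with hz
  have hzC : z ∈ C := by
    rw [hC]
    have := Finset.centerMass_mem_convexHull (t := s) (w := fun _ => ((s.card : ℝ)⁻¹))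
      (z := a) (by intro i _; positivity)
      (by rw [Finset.sum_const]; simp; positivity)
      (by intro i hi; exact Set.mem_image_of_mem a (by rw [hs] at hi; exact Finset.ne_of_mem_erase hi))
    rwa [Finset.centerMass_eq_of_sum_1] at this
    rw [Finset.sum_const, nsmul_eq_mul, mul_inv_cancel₀ (ne_of_gt hcardpos)]
  have hyC : y ∈ C := intrinsicInterior_subset hy
  have hyA : y ∈ affineSpan ℝ C := subset_affineSpan ℝ C hyC
  have hzA : z ∈ affineSpan ℝ C := subset_affineSpan ℝ C hzC
  rcases mem_intrinsicInterior.1 hy with ⟨y', hy', hy'eq⟩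
  -- line map into the affine span
  have hlm : ∀ t : ℝ, AffineMap.lineMap z y t ∈ affineSpan ℝ C := fun t =>
    AffineMap.lineMap_mem t hzA hyA
  set G : ℝ → affineSpan ℝ C := fun t => ⟨AffineMap.lineMap z y t, hlm t⟩ with hG
  have hGc : Continuous G := Continuous.subtype_mk AffineMap.lineMap_continuous _
  have hG1 : G 1 = y' := by
    apply Subtype.ext
    simp [hG, hy'eq]
  have hopen : IsOpen (G ⁻¹' interior (((↑) : affineSpan ℝ C → EuclideanSpace ℝ (Fin d)) ⁻¹' C)) :=
    isOpen_interior.preimage hGc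
  have h1mem : (1:ℝ) ∈ G ⁻¹' interior (((↑) : affineSpan ℝ C → EuclideanSpace ℝ (Fin d)) ⁻¹' C) := by
    simp only [Set.mem_preimage, hG1]; exact hy'
  rcases Metric.isOpen_iff.1 hopen 1 h1mem with ⟨ε, hε, hball⟩
  set t : ℝ := 1 + ε / 2 with ht
  have ht1 : 1 < t := by simp [ht]; positivity
  have htmem : G t ∈ interior (((↑) : affineSpan ℝ C → EuclideanSpace ℝ (Fin d)) ⁻¹' C) := by
    apply hball
    have hd : dist t 1 = ε / 2 := by
      rw [Real.dist_eq, ht, show (1 + ε / 2 - 1 : ℝ) = ε / 2 by ring,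
        abs_of_pos (by positivity)]
    rw [Metric.mem_ball, hd]; linarith
  have hwC : AffineMap.lineMap z y t ∈ C := interior_subset (s := Subtype.val ⁻¹' C) htmem
  rw [hC, hset, Finset.convexHull_eq] at hwC
  obtain ⟨v, hv0, hv1, hvc⟩ := hwC
  have hinja : ∀ i ∈ s, ∀ j ∈ s, a i = a j → i = j := fun i _ j _ h => ha h
  have hsum_img : ∑ j ∈ s, v (a j) = 1 := by
    rw [← Finset.sum_image hinja]; exact hv1
  have hcm : ∑ j ∈ s, v (a j) • a j = AffineMap.lineMap z y t := by
    rw [← hvc, Finset.centerMass_eq_of_sum_1 _ _ hv1, Finset.sum_image hinja]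
    simp
  have ht0 : (0:ℝ) < t := lt_trans one_pos ht1
  have htinv1 : t⁻¹ < 1 := by
    rw [inv_lt_one_iff₀]; right; exact ht1
  have htinvpos : (0:ℝ) < t⁻¹ := inv_pos.2 ht0
  refine ⟨fun i => t⁻¹ * v (a i) + (1 - t⁻¹) * (s.card : ℝ)⁻¹, ?_, ?_, ?_⟩
  · intro i hi
    have hmem : a i ∈ s.image a := Finset.mem_image_of_mem a (by simp [hs, hi])
    have := hv0 _ hmem
    have hc : (0:ℝ) < (s.card : ℝ)⁻¹ := inv_pos.2 hcardpos
    nlinarith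
  · rw [Finset.sum_add_distrib, ← Finset.mul_sum, hsum_img, ← Finset.mul_sum,
      Finset.sum_const, nsmul_eq_mul, mul_inv_cancel₀ (ne_of_gt hcardpos)]
    ring
  · have : ∀ i ∈ s, (t⁻¹ * v (a i) + (1 - t⁻¹) * (s.card : ℝ)⁻¹) • a i
        = t⁻¹ • (v (a i) • a i) + (1 - t⁻¹) • (((s.card : ℝ)⁻¹) • a i) := by
      intro i _; rw [add_smul, smul_smul, smul_smul]
    rw [Finset.sum_congr rfl this, Finset.sum_add_distrib, ← Finset.smul_sum, ← Finset.smul_sum,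
      hcm, ← hz]
    rw [AffineMap.lineMap_apply_module]
    match_scalars <;> field_simp <;> ring


/-- With `a 0 = 0` and `P₁` the polytope spanned by the remaining vertices: for
`x ∈ P°` and `λ > 1` with `λ x` in the relative interior of `P₁`,
`U_{n-1}(λx) - n ln λ + ln(λ-1) ≤ U(x)`, with equality for `λ = (1 - p₁(x))⁻¹`. -/
theorem stmt_17 {d n : ℕ} (hn : 2 ≤ n + 1)
    (a : Fin (n + 1) → EuclideanSpace ℝ (Fin d))
    (ha : Function.Injective a) (ha0 : a 0 = 0)
    (P : Set (EuclideanSpace ℝ (Fin d)))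
    (hP : P = convexHull ℝ (Set.range a))
    (hvert : ∀ i, a i ∈ Set.extremePoints ℝ P)
    (hint : (interior P).Nonempty)
    (P1 : Set (EuclideanSpace ℝ (Fin d)))
    (hP1 : P1 = convexHull ℝ (a '' {i | i ≠ 0}))
    (p : EuclideanSpace ℝ (Fin d) → Fin (n + 1) → ℝ)
    (hp : ∀ x ∈ interior P, (∀ i, 0 < p x i) ∧ ∑ i, p x i = 1 ∧
      ∑ i, p x i • a i = x ∧ ∑ i, Real.log (p x i) = entropyU a x) :
    ∀ x ∈ interior P, ∀ lam : ℝ, 1 < lam → lam • x ∈ intrinsicInterior ℝ P1 →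
      (entropyU1 a (lam • x) - ((n : ℝ) + 1) * Real.log lam + Real.log (lam - 1)
          ≤ entropyU a x) ∧
      (lam = (1 - p x 0)⁻¹ →
        entropyU1 a (lam • x) - ((n : ℝ) + 1) * Real.log lam + Real.log (lam - 1)
          = entropyU a x) := by
  classical
  intro x hx lam hlam hmem
  obtain ⟨hppos, hpsum, hpcomb, hpU⟩ := hp x hx
  have hn1 : 1 ≤ n := Nat.le_of_succ_le_succ hn
  have hlam0 : (0:ℝ) < lam := lt_trans one_pos hlam
  have hlamne : lam ≠ 0 := ne_of_gt hlam0
  have hl1 : (0:ℝ) < lam - 1 := by linarith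
  set S : Set ℝ := {s | ∃ p' : Fin (n + 1) → ℝ, (∀ i, 0 < p' i) ∧ ∑ i, p' i = 1 ∧
    ∑ i, p' i • a i = x ∧ s = ∑ i, Real.log (p' i)} with hS
  set S1 : Set ℝ := {s | ∃ q : Fin (n + 1) → ℝ, (∀ i, i ≠ 0 → 0 < q i) ∧
    ∑ i ∈ Finset.univ.erase 0, q i = 1 ∧
    ∑ i ∈ Finset.univ.erase 0, q i • a i = lam • x ∧
    s = ∑ i ∈ Finset.univ.erase 0, Real.log (q i)} with hS1
  have hEU : entropyU a x = sSup S := rfl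
  have hEU1 : entropyU1 a (lam • x) = sSup S1 := rfl
  have hbddS : BddAbove S := by
    refine ⟨0, ?_⟩
    rintro s ⟨p', h1, h2, h3, rfl⟩
    apply Finset.sum_nonpos
    intro i _
    refine Real.log_nonpos (le_of_lt (h1 i)) ?_
    rw [← h2]
    exact Finset.single_le_sum (fun j _ => le_of_lt (h1 j)) (Finset.mem_univ i)
  have hbddS1 : BddAbove S1 := by
    refine ⟨0, ?_⟩
    rintro s ⟨q, h1, h2, h3, rfl⟩
    apply Finset.sum_nonpos
    intro i hi
    refine Real.log_nonpos (le_of_lt (h1 i (Finset.ne_of_mem_erase hi))) ?_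
    rw [← h2]
    exact Finset.single_le_sum (fun j hj => le_of_lt (h1 j (Finset.ne_of_mem_erase hj))) hi
  have hcard : (Finset.univ.erase (0 : Fin (n + 1))).card = n := by simp
  have key : ∀ s ∈ S1,
      s ≤ entropyU a x + (((n:ℝ) + 1) * Real.log lam - Real.log (lam - 1)) := by
    rintro s ⟨q, h1, h2, h3, rfl⟩
    set p' : Fin (n + 1) → ℝ := fun i => if i = 0 then (lam - 1) / lam else q i / lam with hp'
    have hp'pos : ∀ i, 0 < p' i := by
      intro i
      rcases eq_or_ne i 0 with hi | hi
      · simp only [hp', hi, if_pos rfl]; positivity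
      · simp only [hp', if_neg hi]; exact div_pos (h1 i hi) hlam0
    have hp'0 : p' 0 = (lam - 1) / lam := by simp [hp']
    have herase : ∀ i ∈ Finset.univ.erase (0 : Fin (n + 1)), p' i = q i / lam :=
      fun i hi => by simp [hp', Finset.ne_of_mem_erase hi]
    have hsum' : ∑ i, p' i = 1 := by
      rw [← Finset.sum_erase_add _ _ (Finset.mem_univ (0 : Fin (n + 1))),
        Finset.sum_congr rfl herase, ← Finset.sum_div, h2, hp'0]
      field_simp
      ring
    have hcomb' : ∑ i, p' i • a i = x := by
      rw [← Finset.sum_erase_add _ _ (Finset.mem_univ (0 : Fin (n + 1)))]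
      have h0 : p' 0 • a 0 = 0 := by rw [ha0, smul_zero]
      have hterm : ∀ i ∈ Finset.univ.erase (0 : Fin (n + 1)),
          p' i • a i = lam⁻¹ • (q i • a i) := by
        intro i hi
        rw [herase i hi, smul_smul, div_eq_inv_mul]
      rw [h0, add_zero, Finset.sum_congr rfl hterm, ← Finset.smul_sum, h3, smul_smul,
        inv_mul_cancel₀ hlamne, one_smul]
    have hlog : ∑ i, Real.log (p' i) =
        ∑ i ∈ Finset.univ.erase 0, Real.log (q i)
          - ((n:ℝ) + 1) * Real.log lam + Real.log (lam - 1) := by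
      rw [← Finset.sum_erase_add _ _ (Finset.mem_univ (0 : Fin (n + 1)))]
      have h0 : Real.log (p' 0) = Real.log (lam - 1) - Real.log lam := by
        rw [hp'0, Real.log_div (ne_of_gt hl1) hlamne]
      have h1' : ∀ i ∈ Finset.univ.erase (0 : Fin (n + 1)),
          Real.log (p' i) = Real.log (q i) - Real.log lam := by
        intro i hi
        rw [herase i hi, Real.log_div (ne_of_gt (h1 i (Finset.ne_of_mem_erase hi))) hlamne]
      rw [Finset.sum_congr rfl h1', Finset.sum_sub_distrib, Finset.sum_const, hcard, h0]
      push_cast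
      ring
    have hle : ∑ i, Real.log (p' i) ≤ sSup S :=
      le_csSup hbddS ⟨p', hp'pos, hsum', hcomb', rfl⟩
    rw [hEU]
    linarith
  obtain ⟨q0, hq0pos, hq0sum, hq0comb⟩ := exists_pos_rep hn1 a ha (lam • x) (by rwa [← hP1])
  have hS1ne : S1.Nonempty := ⟨_, q0, hq0pos, hq0sum, hq0comb, rfl⟩
  have hineq : entropyU1 a (lam • x) ≤
      entropyU a x + (((n:ℝ) + 1) * Real.log lam - Real.log (lam - 1)) := by
    rw [hEU1]; exact csSup_le hS1ne key
  constructor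
  · linarith
  · intro hleq
    have h10 : (1 : ℝ) - p x 0 = lam⁻¹ := by rw [hleq, inv_inv]
    set q : Fin (n + 1) → ℝ := fun i => lam * p x i with hq
    have hqpos : ∀ i, i ≠ 0 → 0 < q i := fun i _ => mul_pos hlam0 (hppos i)
    have hsume : ∑ i ∈ Finset.univ.erase (0 : Fin (n + 1)), p x i = 1 - p x 0 := by
      have h := Finset.sum_erase_add Finset.univ (p x) (Finset.mem_univ (0 : Fin (n + 1)))
      rw [hpsum] at h
      linarith
    have hqsum : ∑ i ∈ Finset.univ.erase (0 : Fin (n + 1)), q i = 1 := by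
      simp only [hq]
      rw [← Finset.mul_sum, hsume, h10, mul_inv_cancel₀ hlamne]
    have hcombe : ∑ i ∈ Finset.univ.erase (0 : Fin (n + 1)), p x i • a i = x := by
      have h := Finset.sum_erase_add Finset.univ (fun i => p x i • a i)
        (Finset.mem_univ (0 : Fin (n + 1)))
      simp only [ha0, smul_zero, add_zero] at h
      rw [hpcomb] at h
      exact h
    have hqcomb : ∑ i ∈ Finset.univ.erase (0 : Fin (n + 1)), q i • a i = lam • x := by
      have hterm : ∀ i ∈ Finset.univ.erase (0 : Fin (n + 1)),
          q i • a i = lam • (p x i • a i) := by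
        intro i _
        rw [hq, smul_smul]
      rw [Finset.sum_congr rfl hterm, ← Finset.smul_sum, hcombe]
    have hp0 : p x 0 = (lam - 1) / lam := by
      have h2 : (1 - p x 0) * lam = 1 := by rw [h10, inv_mul_cancel₀ hlamne]
      rw [eq_div_iff hlamne]
      ring_nf at h2 ⊢
      linarith
    have hsplit : ∑ i ∈ Finset.univ.erase (0 : Fin (n + 1)), Real.log (p x i) =
        entropyU a x - Real.log (p x 0) := by
      have h := Finset.sum_erase_add Finset.univ (fun i => Real.log (p x i))
        (Finset.mem_univ (0 : Fin (n + 1)))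
      rw [hpU] at h
      linarith
    have hqlog : ∑ i ∈ Finset.univ.erase (0 : Fin (n + 1)), Real.log (q i) =
        entropyU a x + ((n:ℝ) + 1) * Real.log lam - Real.log (lam - 1) := by
      have hterm : ∀ i ∈ Finset.univ.erase (0 : Fin (n + 1)),
          Real.log (q i) = Real.log lam + Real.log (p x i) := by
        intro i _
        rw [hq]
        exact Real.log_mul hlamne (ne_of_gt (hppos i))
      have hlogp0 : Real.log (p x 0) = Real.log (lam - 1) - Real.log lam := by
        rw [hp0, Real.log_div (ne_of_gt hl1) hlamne]
      rw [Finset.sum_congr rfl hterm, Finset.sum_add_distrib, Finset.sum_const, hcard,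
        hsplit, hlogp0]
      push_cast
      ring
    have hge : entropyU a x + ((n:ℝ) + 1) * Real.log lam - Real.log (lam - 1) ≤ sSup S1 := by
      rw [← hqlog]
      exact le_csSup hbddS1 ⟨q, hqpos, hqsum, hqcomb, rfl⟩
    rw [hEU1] at hineq ⊢
    linarith
end

section
/- Let $p_k$ be the entropy-maximizing weights on the interior $P^o$ of a polytope with vertices $a_1,\dots,a_n$, and for $\xi\ne0$ let $d(x,\xi)$ be the distance from $x\in P^o$ to $\partial P$ along the ray $x+t\xi/|\xi|$, $t\ge0$. Then for every $x\in P^o$ and every $k$, $p_k(x) \ge d(x, x-a_k) / \big(n\, d(x,x-a_k) + n |x-a_k|\big)$. -/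
open Finset

/-- The distance from `x` to the boundary of `P` along the ray `x + t ξ/‖ξ‖`, `t ≥ 0`:
the supremum of those `t ≥ 0` for which the point of the ray at distance `t` is in `P`. -/
noncomputable def rayDist {d : ℕ} (P : Set (EuclideanSpace ℝ (Fin d)))
    (x ξ : EuclideanSpace ℝ (Fin d)) : ℝ :=
  sSup {t : ℝ | 0 ≤ t ∧ x + (t * ‖ξ‖⁻¹) • ξ ∈ P}

/-- Any point of the convex hull of the range of `a` is a convex combination of the `a i`. -/
lemma hull_weights {d n : ℕ} (a : Fin n → EuclideanSpace ℝ (Fin d))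
    {y : EuclideanSpace ℝ (Fin d)} (hy : y ∈ convexHull ℝ (Set.range a)) :
    ∃ q : Fin n → ℝ, (∀ i, 0 ≤ q i) ∧ ∑ i, q i = 1 ∧ ∑ i, q i • a i = y := by
  have h : convexHull ℝ (Set.range a) ⊆
      {y | ∃ q : Fin n → ℝ, (∀ i, 0 ≤ q i) ∧ ∑ i, q i = 1 ∧ ∑ i, q i • a i = y} := by
    apply convexHull_min
    · rintro _ ⟨j, rfl⟩
      refine ⟨fun i => if i = j then 1 else 0, fun i => by positivity, by simp, ?_⟩
      simp [ite_smul]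
    · rintro y ⟨q, hq0, hq1, rfl⟩ z ⟨r, hr0, hr1, rfl⟩ α β hα hβ hαβ
      refine ⟨fun i => α * q i + β * r i,
        fun i => by have := hq0 i; have := hr0 i; positivity, ?_, ?_⟩
      · rw [Finset.sum_add_distrib, ← Finset.mul_sum, ← Finset.mul_sum, hq1, hr1]
        simpa using hαβ
      · simp only [add_smul, mul_smul, Finset.sum_add_distrib, ← Finset.smul_sum]
  exact h hy

lemma log_one_add_ge {w : ℝ} (h : |w| ≤ 1/2) : w - 2*w^2 ≤ Real.log (1 + w) := by
  obtain ⟨hl, hr⟩ := abs_le.mp h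
  have h1 : (0:ℝ) < 1 + w := by linarith
  have h2 := Real.log_le_sub_one_of_pos (x := (1+w)⁻¹) (by positivity)
  rw [Real.log_inv] at h2
  have h3 : 1 - (1+w)⁻¹ ≤ Real.log (1+w) := by linarith
  have h4 : 1 - (1+w)⁻¹ = w / (1+w) := by field_simp; ring
  have h5 : w - 2*w^2 ≤ w / (1+w) := by
    rw [le_div_iff₀ h1]
    nlinarith [sq_nonneg w, mul_nonneg (sq_nonneg w) (by linarith : (0:ℝ) ≤ 1 + 2*w)]
  linarith

/-- Key first-order optimality consequence: if `p` is the entropy maximizer at `x` and `r`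
is any other admissible (nonnegative) weight system for `x`, then `∑ rᵢ/pᵢ ≤ n`. -/
lemma sum_ratio_le {d n : ℕ} (a : Fin n → EuclideanSpace ℝ (Fin d))
    (x : EuclideanSpace ℝ (Fin d)) (p r : Fin n → ℝ)
    (hp0 : ∀ i, 0 < p i) (hp1 : ∑ i, p i = 1) (hpa : ∑ i, p i • a i = x)
    (hmax : ∑ i, Real.log (p i) = entropyU a x)
    (hr0 : ∀ i, 0 ≤ r i) (hr1 : ∑ i, r i = 1) (hra : ∑ i, r i • a i = x) :
    ∑ i, r i / p i ≤ (n : ℝ) := by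
  -- boundedness of the defining set of `entropyU`
  have hbdd : BddAbove {s | ∃ p : Fin n → ℝ, (∀ i, 0 < p i) ∧ ∑ i, p i = 1 ∧
      ∑ i, p i • a i = x ∧ s = ∑ i, Real.log (p i)} := by
    refine ⟨0, ?_⟩
    rintro s ⟨p', hp'0, hp'1, -, rfl⟩
    apply Finset.sum_nonpos
    intro i _
    apply Real.log_nonpos (hp'0 i).le
    calc p' i ≤ ∑ j, p' j :=
      Finset.single_le_sum (fun j _ => (hp'0 j).le) (Finset.mem_univ i)
    _ = 1 := hp'1
  set v : Fin n → ℝ := fun i => r i / p i - 1 with hv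
  -- for every θ ∈ (0,1), the mixed weights are admissible, hence the log-sum is ≤ max
  have hθle : ∀ θ : ℝ, 0 < θ → θ < 1 → ∑ i, Real.log (1 + θ * v i) ≤ 0 := by
    intro θ hθ0 hθ1
    set q : Fin n → ℝ := fun i => (1 - θ) * p i + θ * r i with hq
    have hq0 : ∀ i, 0 < q i := by
      intro i
      have := hp0 i; have := hr0 i
      have h1θ : (0:ℝ) < 1 - θ := by linarith
      positivity
    have hqeq : ∀ i, q i = p i * (1 + θ * v i) := by
      intro i
      have hpne := (hp0 i).ne'
      simp only [hq, hv]
      linear_combination (-θ) * div_mul_cancel₀ (r i) hpne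
    have hz : ∀ i, 0 < 1 + θ * v i := by
      intro i
      have h1 : 0 < p i * (1 + θ * v i) := (hqeq i) ▸ hq0 i
      nlinarith [hp0 i]
    have hq1 : ∑ i, q i = 1 := by
      simp only [hq, Finset.sum_add_distrib, ← Finset.mul_sum, hp1, hr1]
      ring
    have hqa : ∑ i, q i • a i = x := by
      have : ∑ i, q i • a i = (1 - θ) • ∑ i, p i • a i + θ • ∑ i, r i • a i := by
        simp only [hq, add_smul, mul_smul, Finset.sum_add_distrib, ← Finset.smul_sum]
      rw [this, hpa, hra, ← add_smul]
      simp
    have hmem : (∑ i, Real.log (q i)) ∈ {s | ∃ p : Fin n → ℝ, (∀ i, 0 < p i) ∧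
        ∑ i, p i = 1 ∧ ∑ i, p i • a i = x ∧ s = ∑ i, Real.log (p i)} :=
      ⟨q, hq0, hq1, hqa, rfl⟩
    have hle : ∑ i, Real.log (q i) ≤ ∑ i, Real.log (p i) := by
      rw [hmax]
      exact le_csSup hbdd hmem
    have hsplit : ∑ i, Real.log (q i)
        = ∑ i, Real.log (p i) + ∑ i, Real.log (1 + θ * v i) := by
      rw [← Finset.sum_add_distrib]
      refine Finset.sum_congr rfl fun i _ => ?_
      rw [hqeq i, Real.log_mul (hp0 i).ne' (hz i).ne']
    linarith [hsplit ▸ hle]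
  -- conclude `∑ v ≤ 0` by a quantitative first-order argument
  set A : ℝ := ∑ i, v i with hA
  set B : ℝ := ∑ i, (v i)^2 with hB
  have hBnn : 0 ≤ B := Finset.sum_nonneg fun i _ => sq_nonneg _
  set V : ℝ := ∑ i, |v i| with hV
  have hVnn : 0 ≤ V := Finset.sum_nonneg fun i _ => abs_nonneg _
  have hVi : ∀ i, |v i| ≤ V :=
    fun i => Finset.single_le_sum (fun j _ => abs_nonneg (v j)) (Finset.mem_univ i)
  have hkey : ∀ θ : ℝ, 0 < θ → θ ≤ 1 / (2 * (V + 1)) → A ≤ 2 * θ * B := by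
    intro θ hθ0 hθle'
    have hθ1 : θ < 1 := by
      have : 1 / (2 * (V + 1)) ≤ 1/2 := by
        rw [div_le_div_iff₀ (by linarith) (by norm_num)]
        linarith
      linarith
    have hwb : ∀ i, |θ * v i| ≤ 1/2 := by
      intro i
      rw [abs_mul, abs_of_pos hθ0]
      calc θ * |v i| ≤ (1 / (2 * (V + 1))) * (V + 1) := by
            apply mul_le_mul hθle' (by linarith [hVi i]) (abs_nonneg _) (by positivity)
      _ = 1/2 := by field_simp
    have hsum : ∑ i, (θ * v i - 2 * (θ * v i)^2) ≤ ∑ i, Real.log (1 + θ * v i) :=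
      Finset.sum_le_sum fun i _ => log_one_add_ge (hwb i)
    have heq : ∑ i, (θ * v i - 2 * (θ * v i)^2) = θ * A - 2 * θ^2 * B := by
      rw [Finset.sum_sub_distrib, ← Finset.mul_sum]
      congr 1
      rw [Finset.mul_sum]
      refine Finset.sum_congr rfl fun i _ => by ring
    have := hθle θ hθ0 hθ1
    nlinarith
  have hA0 : A ≤ 0 := by
    by_contra hc
    push_neg at hc
    set θ := min (1 / (2 * (V + 1))) (A / (4 * B + 1)) with hθ
    have hθ0 : 0 < θ := lt_min (by positivity) (by positivity)
    have h1 := hkey θ hθ0 (min_le_left _ _)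
    have h2 : θ ≤ A / (4 * B + 1) := min_le_right _ _
    have h3 : 2 * θ * B ≤ 2 * (A / (4 * B + 1)) * B := by
      apply mul_le_mul_of_nonneg_right _ hBnn
      linarith
    have h4 : 2 * (A / (4 * B + 1)) * B < A := by
      have hd : (0:ℝ) < 4 * B + 1 := by linarith
      have he : 2 * (A / (4 * B + 1)) * B = A * (2 * B / (4 * B + 1)) := by ring
      rw [he]
      exact mul_lt_of_lt_one_right hc ((div_lt_one hd).mpr (by linarith))
    linarith
  have : A = ∑ i, r i / p i - n := by
    simp [hA, hv, Finset.sum_sub_distrib, Finset.card_univ]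
  linarith [this ▸ hA0]

/-- Lower bound for the entropy-maximizing weights:
`pₖ(x) ≥ d(x, x-aₖ) / (n d(x, x-aₖ) + n |x-aₖ|)`. -/
theorem stmt_18 {d n : ℕ} (hn : 2 ≤ n) (a : Fin n → EuclideanSpace ℝ (Fin d))
    (ha : Function.Injective a)
    (P : Set (EuclideanSpace ℝ (Fin d)))
    (hP : P = convexHull ℝ (Set.range a))
    (hvert : ∀ i, a i ∈ Set.extremePoints ℝ P)
    (hint : (interior P).Nonempty)
    (p : EuclideanSpace ℝ (Fin d) → Fin n → ℝ)
    (hp : ∀ x ∈ interior P, (∀ i, 0 < p x i) ∧ ∑ i, p x i = 1 ∧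
      ∑ i, p x i • a i = x ∧ ∑ i, Real.log (p x i) = entropyU a x) :
    ∀ x ∈ interior P, ∀ k,
      p x k ≥ rayDist P x (x - a k)
        / ((n : ℝ) * rayDist P x (x - a k) + (n : ℝ) * ‖x - a k‖) := by
  intro x hx k
  obtain ⟨hp0, hp1, hpa, hmax⟩ := hp x hx
  have hxP : x ∈ P := interior_subset hx
  set ξ := x - a k with hξdef
  by_cases hξ : ξ = 0
  · -- degenerate case: the ray direction is zero, `rayDist = 0` by the `sSup` convention
    have hset : {t : ℝ | 0 ≤ t ∧ x + (t * ‖ξ‖⁻¹) • ξ ∈ P} = Set.Ici 0 := by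
      ext t
      simp [hξ, hxP]
    have hrd : rayDist P x ξ = 0 := by
      rw [rayDist, hset]
      exact Real.sSup_of_not_bddAbove (not_bddAbove_Ici (a := (0:ℝ)))
    rw [hrd]
    simp only [hξ, norm_zero]
    rw [ge_iff_le]
    calc (0:ℝ) / ((n:ℝ) * 0 + (n:ℝ) * 0) = 0 := by simp
    _ ≤ p x k := (hp0 k).le
  · have hnξ : 0 < ‖ξ‖ := norm_pos_iff.mpr hξ
    set S := {t : ℝ | 0 ≤ t ∧ x + (t * ‖ξ‖⁻¹) • ξ ∈ P} with hS
    have h0S : (0:ℝ) ∈ S := ⟨le_refl 0, by simp [hxP]⟩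
    have hSne : S.Nonempty := ⟨0, h0S⟩
    -- boundedness of S
    obtain ⟨R, hR⟩ : ∃ R, ∀ y ∈ P, ‖y‖ ≤ R := by
      have hPc : IsCompact P := hP ▸ (Set.finite_range a).isCompact_convexHull ℝ
      exact hPc.isBounded.exists_norm_le
    have hSbdd : BddAbove S := by
      refine ⟨R + ‖x‖, ?_⟩
      rintro t ⟨ht0, htP⟩
      have h1 : ‖x + (t * ‖ξ‖⁻¹) • ξ‖ ≤ R := hR _ htP
      have h2 : ‖(t * ‖ξ‖⁻¹) • ξ‖ = t := by
        rw [norm_smul, Real.norm_eq_abs, abs_of_nonneg (by positivity),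
          mul_assoc, inv_mul_cancel₀ hnξ.ne', mul_one]
      have h3 : ‖(t * ‖ξ‖⁻¹) • ξ‖ ≤ ‖x + (t * ‖ξ‖⁻¹) • ξ‖ + ‖x‖ := by
        calc ‖(t * ‖ξ‖⁻¹) • ξ‖ = ‖(x + (t * ‖ξ‖⁻¹) • ξ) - x‖ := by
              rw [add_sub_cancel_left]
        _ ≤ _ := norm_sub_le _ _
      linarith
    have hD0 : 0 ≤ rayDist P x ξ := le_csSup hSbdd h0S
    have hnpos : (0:ℝ) < n := by positivity
    -- the key estimate for each t ∈ S
    have hkey : ∀ t ∈ S, t * (1 - (n:ℝ) * p x k) ≤ (n:ℝ) * p x k * ‖ξ‖ := by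
      rintro t ⟨ht0, htP⟩
      set s := t * ‖ξ‖⁻¹ with hs
      have hs0 : 0 ≤ s := by positivity
      have h1s : (0:ℝ) < 1 + s := by linarith
      obtain ⟨q, hq0, hq1, hqa⟩ := hull_weights a (hP ▸ htP)
      set r : Fin n → ℝ := fun i => q i / (1 + s) + (if i = k then s / (1 + s) else 0)
        with hrdef
      have hr0 : ∀ i, 0 ≤ r i := by
        intro i
        have hqi := hq0 i
        have h1 : 0 ≤ q i / (1 + s) := by positivity
        have h2 : 0 ≤ (if i = k then s / (1 + s) else 0) := by
          split_ifs <;> positivity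
        exact add_nonneg h1 h2
      have hr1 : ∑ i, r i = 1 := by
        simp only [hrdef, Finset.sum_add_distrib, Finset.sum_ite_eq',
          Finset.mem_univ, if_true]
        rw [← Finset.sum_div, hq1]
        field_simp
      have hra : ∑ i, r i • a i = x := by
        have h1 : ∑ i, r i • a i
            = (1 + s)⁻¹ • (∑ i, q i • a i) + (s / (1 + s)) • a k := by
          simp only [hrdef, add_smul, Finset.sum_add_distrib, ite_smul, zero_smul,
            Finset.sum_ite_eq', Finset.mem_univ, if_true, div_eq_inv_mul, mul_smul,
            ← Finset.smul_sum]
        rw [h1, hqa]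
        have hy : x + (t * ‖ξ‖⁻¹) • ξ = x + s • (x - a k) := by rw [hs, hξdef]
        rw [hy]
        match_scalars <;> field_simp <;> ring
      have hsum := sum_ratio_le a x (p x) r hp0 hp1 hpa hmax hr0 hr1 hra
      have hrk : r k / p x k ≤ ∑ i, r i / p x i :=
        Finset.single_le_sum (fun i _ => div_nonneg (hr0 i) (hp0 i).le)
          (Finset.mem_univ k)
      have hrk2 : r k ≤ (n:ℝ) * p x k := by
        have := (div_le_iff₀ (hp0 k)).mp (le_trans hrk hsum)
        linarith
      have hrk3 : s / (1 + s) ≤ r k := by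
        have hqk := hq0 k
        have h1 : 0 ≤ q k / (1 + s) := by positivity
        have h2 : r k = q k / (1 + s) + s / (1 + s) := by simp [hrdef]
        rw [h2]
        linarith
      -- so s/(1+s) ≤ n p, i.e. s ≤ n p (1 + s)
      have h5 : s ≤ (n:ℝ) * p x k * (1 + s) := by
        have h6 : s / (1 + s) ≤ (n:ℝ) * p x k := le_trans hrk3 hrk2
        calc s = (s / (1 + s)) * (1 + s) := by field_simp
        _ ≤ ((n:ℝ) * p x k) * (1 + s) := by
            apply mul_le_mul_of_nonneg_right h6 h1s.le
      -- substitute s = t/‖ξ‖ and multiply through by ‖ξ‖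
      have hts : s * ‖ξ‖ = t := by
        rw [hs, mul_assoc, inv_mul_cancel₀ hnξ.ne', mul_one]
      have h9 := mul_le_mul_of_nonneg_right h5 hnξ.le
      rw [hts] at h9
      have h10 : (n:ℝ) * p x k * (1 + s) * ‖ξ‖
          = (n:ℝ) * p x k * ‖ξ‖ + (n:ℝ) * p x k * (s * ‖ξ‖) := by ring
      rw [hts] at h10
      rw [h10] at h9
      linarith
    by_cases hnp : 1 ≤ (n:ℝ) * p x k
    · rw [ge_iff_le, div_le_iff₀ (by nlinarith)]
      have e1 : rayDist P x ξ ≤ ((n:ℝ) * p x k) * rayDist P x ξ :=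
        le_mul_of_one_le_left hD0 hnp
      have e2 : 0 ≤ p x k * ((n:ℝ) * ‖ξ‖) :=
        mul_nonneg (hp0 k).le (by positivity)
      nlinarith
    · push_neg at hnp
      have hDb : rayDist P x ξ ≤ (n:ℝ) * p x k * ‖ξ‖ / (1 - (n:ℝ) * p x k) := by
        apply csSup_le hSne
        intro t ht
        rw [le_div_iff₀ (by linarith)]
        exact hkey t ht
      have hD1 : rayDist P x ξ * (1 - (n:ℝ) * p x k) ≤ (n:ℝ) * p x k * ‖ξ‖ := by
        rw [← le_div_iff₀ (by linarith)]
        exact hDb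
      rw [ge_iff_le, div_le_iff₀ (by nlinarith)]
      nlinarith [hD1]
end
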